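/- arXiv:2506.09051 — 3 statements merged into one kernel-verified Lean document; each statement's English description precedes it below -/
import Mathlib

section
/- Let I = ⟨x_{i_1}^{a_1},...,x_{i_k}^{a_k}⟩ with 1 ≤ a_1 ≤ ... ≤ a_k, k ≥ 2, and suppose there exists j ≥ 2 with a_1 = ... = a_{j-1} ≤ a_j = ... = a_k. Then for all n ≥ 1, v(\overline{I^n}) = n·a_1 + ⌈a_k/a_1⌉ − 2. -/
open MvPolynomial Ideal

/-- The integral closure of an ideal. -/
noncomputable def intClosure {R : Type*} [CommRing R] (I : Ideal R) : Ideal R :=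
  Ideal.span {x : R | ∃ n : ℕ, 0 < n ∧ ∃ c : ℕ → R,
    (∀ i ∈ Finset.Icc 1 n, c i ∈ I ^ i) ∧
    x ^ n + ∑ i ∈ Finset.Icc 1 n, c i * x ^ (n - i) = 0}

/-- The v-number of a homogeneous ideal `J`. -/
noncomputable def vnumber {K : Type*} [Field K] {σ : Type*}
    (J : Ideal (MvPolynomial σ K)) : ℕ :=
  sInf {d : ℕ | ∃ f : MvPolynomial σ K, f.IsHomogeneous d ∧
    Submodule.colon J (Ideal.span {f}) ∈
      associatedPrimes (MvPolynomial σ K) (MvPolynomial σ K ⧸ J)}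



open MvPolynomial Ideal

section Aux

lemma aux_prod_pow_mem {R : Type*} [CommRing R] (I : Ideal R) {ι : Type*} [DecidableEq ι]
    (g : ι → R) (m : ι → ℕ) (s : Finset ι) (hg : ∀ l ∈ s, g l ∈ I) :
    (∏ l ∈ s, g l ^ m l) ∈ I ^ (∑ l ∈ s, m l) := by
  induction s using Finset.induction with
  | empty => simp [Ideal.one_eq_top]
  | insert _ _ h ih =>
    rw [Finset.prod_insert h, Finset.sum_insert h, pow_add]
    exact Ideal.mul_mem_mul (Ideal.pow_mem_pow (hg _ (Finset.mem_insert_self _ _)) _)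
      (ih fun l hl => hg l (Finset.mem_insert_of_mem hl))

lemma aux_coeff_pow {R : Type*} [CommRing R] (p : Polynomial R) (v : ℕ)
    (hv : ∀ d < v, p.coeff d = 0) (m : ℕ) :
    (p ^ m).coeff (m * v) = (p.coeff v) ^ m := by
  have hdvd : ∀ k : ℕ, Polynomial.X ^ (k * v) ∣ p ^ k := by
    intro k
    have h1 : Polynomial.X ^ v ∣ p := Polynomial.X_pow_dvd_iff.2 hv
    have h2 : Polynomial.X ^ (k * v) = ((Polynomial.X : Polynomial R) ^ v) ^ k := by
      rw [← pow_mul, mul_comm]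
    rw [h2]
    exact pow_dvd_pow_of_dvd h1 k
  induction m with
  | zero => simp
  | succ m ih =>
    have hlow : ∀ d < m * v, (p ^ m).coeff d = 0 := fun d hd =>
      Polynomial.X_pow_dvd_iff.1 (hdvd m) d hd
    have : (p ^ (m + 1)).coeff ((m + 1) * v) = (p * p ^ m).coeff (v + m * v) := by
      ring_nf
    rw [this, Polynomial.coeff_mul]
    rw [Finset.sum_eq_single (v, m * v)]
    · rw [ih]; ring
    · rintro ⟨x, y⟩ hxy hne
      rw [Finset.HasAntidiagonal.mem_antidiagonal] at hxy
      rcases lt_or_ge x v with h | h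
      · rw [hv x h, zero_mul]
      · rcases lt_or_ge y (m * v) with h' | h'
        · rw [hlow y h', mul_zero]
        · exfalso; apply hne
          have hx : x = v := by omega
          have hy : y = m * v := by omega
          simp [hx, hy]
    · intro h
      exfalso; exact h (Finset.HasAntidiagonal.mem_antidiagonal.2 rfl)

lemma aux_X_pow_dvd_of_integral {R : Type*} [CommRing R] [IsDomain R] {D N : ℕ}
    (p : Polynomial R) (c : ℕ → Polynomial R) (hN : 0 < N)
    (hc : ∀ i ∈ Finset.Icc 1 N, Polynomial.X ^ (D * i) ∣ c i)
    (heq : p ^ N + ∑ i ∈ Finset.Icc 1 N, c i * p ^ (N - i) = 0) :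
    Polynomial.X ^ D ∣ p := by
  by_contra hnd
  rw [Polynomial.X_pow_dvd_iff] at hnd
  push_neg at hnd
  obtain ⟨d, hdD, hd0⟩ := hnd
  have hp0 : p ≠ 0 := fun h => hd0 (by simp [h])
  set v := p.natTrailingDegree with hv
  have hvD : v < D := lt_of_le_of_lt (Polynomial.natTrailingDegree_le_of_ne_zero hd0) hdD
  have hvc : p.coeff v ≠ 0 := by
    have := Polynomial.trailingCoeff_nonzero_iff_nonzero.2 hp0
    rwa [Polynomial.trailingCoeff] at this
  have hlow : ∀ d' < v, p.coeff d' = 0 := fun d' hd' =>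
    Polynomial.coeff_eq_zero_of_lt_natTrailingDegree hd'
  have hkey : (p ^ N).coeff (N * v) ≠ 0 := by
    rw [aux_coeff_pow p v hlow N]; exact pow_ne_zero _ hvc
  have hXv : Polynomial.X ^ v ∣ p := Polynomial.X_pow_dvd_iff.2 hlow
  have hsum : Polynomial.X ^ (N * v + 1) ∣ ∑ i ∈ Finset.Icc 1 N, c i * p ^ (N - i) := by
    apply Finset.dvd_sum
    intro i hi
    rw [Finset.mem_Icc] at hi
    have h1 : Polynomial.X ^ (D * i + (N - i) * v) ∣ c i * p ^ (N - i) := by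
      rw [pow_add]
      have hxx : Polynomial.X ^ ((N - i) * v) ∣ p ^ (N - i) := by
        have : Polynomial.X ^ ((N - i) * v) = ((Polynomial.X : Polynomial R) ^ v) ^ (N - i) := by
          rw [← pow_mul, mul_comm]
        rw [this]
        exact pow_dvd_pow_of_dvd hXv _
      exact mul_dvd_mul (hc i (Finset.mem_Icc.2 hi)) hxx
    refine dvd_trans (pow_dvd_pow _ ?_) h1
    have h2 : i * v + i ≤ D * i := by
      calc i * v + i = i * (v + 1) := by ring
      _ ≤ i * D := Nat.mul_le_mul_left i hvD
      _ = D * i := mul_comm _ _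
    have h3 : (N - i) * v + i * v = N * v := by
      rw [← add_mul, Nat.sub_add_cancel hi.2]
    omega
  have hdvdpN : Polynomial.X ^ (N * v + 1) ∣ p ^ N := by
    have : p ^ N = -∑ i ∈ Finset.Icc 1 N, c i * p ^ (N - i) := by
      linear_combination heq
    rw [this]
    exact (dvd_neg).2 hsum
  exact hkey (Polynomial.X_pow_dvd_iff.1 hdvdpN (N * v) (Nat.lt_succ_self _))

end Aux


open MvPolynomial Ideal

section Chi

variable {K : Type*} [CommRing K] {σ : Type*}

/-- The weighting map sending `X s ↦ C (X s) * t ^ w s`. -/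
noncomputable def chiMap (w : σ → ℕ) :
    MvPolynomial σ K →+* Polynomial (MvPolynomial σ K) :=
  MvPolynomial.eval₂Hom (Polynomial.C.comp MvPolynomial.C)
    (fun s => Polynomial.C (MvPolynomial.X s) * Polynomial.X ^ w s)

/-- weighted degree of an exponent vector -/
def wsum (w : σ → ℕ) (b : σ →₀ ℕ) : ℕ := b.sum fun s e => e * w s

lemma wsum_add (w : σ → ℕ) (b b' : σ →₀ ℕ) : wsum w (b + b') = wsum w b + wsum w b' := by
  unfold wsum
  exact Finsupp.sum_add_index' (fun s => zero_mul _) (fun s e e' => add_mul _ _ _)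

lemma chiMap_monomial (w : σ → ℕ) (b : σ →₀ ℕ) (c : K) :
    chiMap w (monomial b c) =
      Polynomial.C (monomial b c) * Polynomial.X ^ (wsum w b) := by
  unfold chiMap
  rw [eval₂Hom_monomial]
  have hprod : (b.prod fun s e => (Polynomial.C (MvPolynomial.X s (R := K)) * Polynomial.X ^ w s) ^ e)
      = Polynomial.C (b.prod fun s e => (MvPolynomial.X s (R := K)) ^ e) *
        Polynomial.X ^ (wsum w b) := by
    rw [Finsupp.prod, Finsupp.prod, wsum, Finsupp.sum]
    have step1 : ∀ s ∈ b.support,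
        (Polynomial.C (MvPolynomial.X s (R := K)) * Polynomial.X ^ w s) ^ b s
        = Polynomial.C ((MvPolynomial.X s (R := K)) ^ b s) * Polynomial.X ^ (b s * w s) := by
      intro s _
      rw [mul_pow, ← pow_mul, ← Polynomial.C_pow, mul_comm (w s) (b s)]
    rw [Finset.prod_congr rfl step1, Finset.prod_mul_distrib, ← map_prod,
      Finset.prod_pow_eq_pow_sum]
  rw [hprod, RingHom.comp_apply, ← mul_assoc, ← Polynomial.C_mul, ← MvPolynomial.monomial_eq]

lemma chiMap_coeff_coeff (w : σ → ℕ) (f : MvPolynomial σ K) (b : σ →₀ ℕ) :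
    MvPolynomial.coeff b ((chiMap w f).coeff (wsum w b)) = MvPolynomial.coeff b f := by
  classical
  induction f using MvPolynomial.induction_on' with
  | monomial b' c =>
    rw [chiMap_monomial, Polynomial.C_mul_X_pow_eq_monomial, Polynomial.coeff_monomial]
    by_cases hb : b' = b
    · subst hb; simp
    · rw [MvPolynomial.coeff_monomial, if_neg hb]
      split_ifs with h
      · rw [MvPolynomial.coeff_monomial, if_neg hb]
      · rw [MvPolynomial.coeff_zero]
  | add p q hp hq =>
    rw [map_add, Polynomial.coeff_add, MvPolynomial.coeff_add, MvPolynomial.coeff_add, hp, hq]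

lemma chiMap_dvd_of (w : σ → ℕ) (D : ℕ) (f : MvPolynomial σ K)
    (h : ∀ b ∈ f.support, D ≤ wsum w b) :
    Polynomial.X ^ D ∣ chiMap w f := by
  conv_rhs => rw [← support_sum_monomial_coeff f]
  rw [map_sum]
  apply Finset.dvd_sum
  intro b hb
  rw [chiMap_monomial]
  exact Dvd.dvd.mul_left (pow_dvd_pow _ (h b hb)) _

lemma of_chiMap_dvd (w : σ → ℕ) (D : ℕ) (f : MvPolynomial σ K)
    (h : Polynomial.X ^ D ∣ chiMap w f) : ∀ b ∈ f.support, D ≤ wsum w b := by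
  intro b hb
  by_contra hlt
  push_neg at hlt
  have h0 : (chiMap w f).coeff (wsum w b) = 0 := Polynomial.X_pow_dvd_iff.1 h _ hlt
  have := chiMap_coeff_coeff w f b
  rw [h0, MvPolynomial.coeff_zero] at this
  exact MvPolynomial.mem_support_iff.1 hb this.symm

lemma chiMap_ne_zero (w : σ → ℕ) (f : MvPolynomial σ K) (hf : f ≠ 0) : chiMap w f ≠ 0 := by
  intro h
  apply hf
  ext b
  have := chiMap_coeff_coeff w f b
  rw [h] at this
  simpa using this.symm

end Chi

section WeightIdeal

variable {K : Type*} [Field K] {σ : Type*}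

/-- The monomial ideal of all polynomials all of whose monomials have `w`-weight at least `D`. -/
noncomputable def weightIdeal (K : Type*) [Field K] (σ : Type*) (w : σ → ℕ) (D : ℕ) :
    Ideal (MvPolynomial σ K) where
  carrier := {f | ∀ b ∈ f.support, D ≤ wsum w b}
  zero_mem' := by simp
  add_mem' := by
    intro f g hf hg b hb
    classical
    have := MvPolynomial.support_add hb
    rcases Finset.mem_union.1 this with h | h
    · exact hf b h
    · exact hg b h
  smul_mem' := by
    intro c f hf b hb
    classical
    rw [smul_eq_mul] at hb
    have := MvPolynomial.support_mul c f hb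
    rcases Finset.mem_add.1 this with ⟨b₁, hb₁, b₂, hb₂, rfl⟩
    rw [wsum_add]
    exact le_add_of_nonneg_of_le (Nat.zero_le _) (hf b₂ hb₂)

lemma mem_weightIdeal_iff (w : σ → ℕ) (D : ℕ) (f : MvPolynomial σ K) :
    f ∈ weightIdeal K σ w D ↔ ∀ b ∈ f.support, D ≤ wsum w b := Iff.rfl

lemma intClosure_le_weightIdeal (w : σ → ℕ) (D : ℕ) (I : Ideal (MvPolynomial σ K))
    (hmap : Ideal.map (chiMap w) I ≤
      Ideal.span {(Polynomial.X : Polynomial (MvPolynomial σ K)) ^ D}) :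
    intClosure I ≤ weightIdeal K σ w D := by
  rw [intClosure, Ideal.span_le]
  rintro z ⟨N, hN, c, hc, heq⟩
  rw [SetLike.mem_coe, mem_weightIdeal_iff]
  have hXD : Polynomial.X ^ D ∣ chiMap w z := by
    apply aux_X_pow_dvd_of_integral (chiMap w z) (fun i => chiMap w (c i)) hN
    · intro i hi
      rw [← Ideal.mem_span_singleton]
      have hspan : (Ideal.span {(Polynomial.X : Polynomial (MvPolynomial σ K)) ^ (D * i)}) =
          Ideal.span {(Polynomial.X : Polynomial (MvPolynomial σ K)) ^ D} ^ i := by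
        rw [Ideal.span_singleton_pow, ← pow_mul]
      rw [hspan]
      have h1 : chiMap w (c i) ∈ Ideal.map (chiMap (K := K) w) (I ^ i) :=
        Ideal.mem_map_of_mem _ (hc i hi)
      rw [Ideal.map_pow] at h1
      exact Ideal.pow_right_mono hmap i h1
    · have := congrArg (chiMap w) heq
      simpa only [map_add, map_pow, map_sum, _root_.map_mul, map_zero] using this
  exact of_chiMap_dvd w D z hXD

end WeightIdeal

section VarPrime

variable {K : Type*} [Field K] {σ : Type*} {ι : Type*}

lemma mem_span_X_iff (i : ι → σ) (f : MvPolynomial σ K) :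
    f ∈ Ideal.span (Set.range fun l => (X (i l) : MvPolynomial σ K)) ↔
      ∀ b ∈ f.support, ∃ l, b (i l) ≠ 0 := by
  classical
  constructor
  · intro hf
    refine Submodule.span_induction ?_ ?_ ?_ ?_ hf
    · rintro x ⟨l, rfl⟩ b hb
      rw [MvPolynomial.support_X] at hb
      rw [Finset.mem_singleton] at hb
      subst hb
      exact ⟨l, by simp⟩
    · simp
    · intro x y _ _ hx hy b hb
      have := MvPolynomial.support_add hb
      rcases Finset.mem_union.1 this with h | h
      · exact hx b h
      · exact hy b h
    · intro r x _ hx b hb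
      rw [smul_eq_mul] at hb
      have := MvPolynomial.support_mul r x hb
      rcases Finset.mem_add.1 this with ⟨b₁, _, b₂, hb₂, rfl⟩
      obtain ⟨l, hl⟩ := hx b₂ hb₂
      exact ⟨l, by simp [Finsupp.add_apply]; omega⟩
  · intro hf
    suffices h : ∑ b ∈ f.support, monomial b (coeff b f) ∈
        Ideal.span (Set.range fun l => (X (i l) : MvPolynomial σ K)) by
      rwa [support_sum_monomial_coeff] at h
    apply Ideal.sum_mem
    intro b hb
    obtain ⟨l, hl⟩ := hf b hb
    have hle : Finsupp.single (i l) 1 ≤ b := by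
      rw [Finsupp.single_le_iff]
      omega
    have : monomial b (coeff b f) =
        monomial (b - Finsupp.single (i l) 1) (coeff b f) * X (i l) := by
      rw [← pow_one (X (i l) : MvPolynomial σ K), MvPolynomial.X_pow_eq_monomial,
        MvPolynomial.monomial_mul, mul_one, tsub_add_cancel_of_le hle]
    rw [this]
    exact Ideal.mul_mem_left _ _ (Ideal.subset_span ⟨l, rfl⟩)

lemma span_X_eq_ker (i : ι → σ) :
    ∃ ψ : MvPolynomial σ K →+* MvPolynomial σ K,
      Ideal.span (Set.range fun l => (X (i l) : MvPolynomial σ K)) = RingHom.ker ψ := by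
  classical
  set g : σ → MvPolynomial σ K := fun s => if h : (∃ l, i l = s) then 0 else X s with hg
  set φ := (MvPolynomial.aeval g : MvPolynomial σ K →ₐ[K] MvPolynomial σ K) with hφ
  refine ⟨(φ : MvPolynomial σ K →+* MvPolynomial σ K), ?_⟩
  have hbad : ∀ (b : σ →₀ ℕ) (c : K), (∃ l, b (i l) ≠ 0) → φ (monomial b c) = 0 := by
    rintro b c ⟨l, hl⟩
    rw [hφ, MvPolynomial.aeval_monomial]
    have hmem : i l ∈ b.support := Finsupp.mem_support_iff.2 hl
    have : (b.prod fun s e => g s ^ e) = 0 := by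
      rw [Finsupp.prod]
      apply Finset.prod_eq_zero hmem
      have hex : ∃ l', i l' = i l := ⟨l, rfl⟩
      rw [hg]
      simp only [dif_pos hex]
      exact zero_pow hl
    rw [this, mul_zero]
  have hgood : ∀ (b : σ →₀ ℕ) (c : K), (∀ l, b (i l) = 0) → φ (monomial b c) = monomial b c := by
    intro b c hb
    rw [hφ, MvPolynomial.aeval_monomial]
    have : (b.prod fun s e => g s ^ e) = (b.prod fun s e => (X s : MvPolynomial σ K) ^ e) := by
      apply Finsupp.prod_congr
      intro s hs
      have hns : ¬ (∃ l, i l = s) := by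
        rintro ⟨l, rfl⟩
        exact Finsupp.mem_support_iff.1 hs (hb l)
      rw [hg]; simp only [dif_neg hns]
    rw [this, MvPolynomial.monomial_eq, MvPolynomial.algebraMap_eq]
  apply le_antisymm
  · rw [Ideal.span_le]
    rintro x ⟨l, rfl⟩
    rw [SetLike.mem_coe, RingHom.mem_ker]
    show φ (X (i l)) = 0
    have h1 : φ (X (i l)) = g (i l) := MvPolynomial.aeval_X _ _
    have hex : ∃ l', i l' = i l := ⟨l, rfl⟩
    rw [h1, hg]
    simp only [dif_pos hex]
  · intro f hf
    rw [RingHom.mem_ker] at hf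
    have hf' : φ f = 0 := hf
    rw [mem_span_X_iff i]
    by_contra hcon
    push_neg at hcon
    obtain ⟨b₀, hb₀, hgood₀⟩ := hcon
    have hexp : coeff b₀ (φ f) = coeff b₀ f := by
      conv_lhs => rw [← support_sum_monomial_coeff f]
      rw [map_sum, MvPolynomial.coeff_sum]
      rw [Finset.sum_eq_single b₀]
      · rw [hgood b₀ _ hgood₀, MvPolynomial.coeff_monomial, if_pos rfl]
      · intro b hb hne
        by_cases h : ∃ l, b (i l) ≠ 0
        · rw [hbad b _ h, MvPolynomial.coeff_zero]
        · push_neg at h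
          rw [hgood b _ h, MvPolynomial.coeff_monomial, if_neg hne]
      · intro h
        exact absurd hb₀ h
    rw [hf', MvPolynomial.coeff_zero] at hexp
    exact Finsupp.mem_support_iff.1 hb₀ hexp.symm

lemma span_X_isPrime (i : ι → σ) :
    (Ideal.span (Set.range fun l => (X (i l) : MvPolynomial σ K))).IsPrime := by
  obtain ⟨ψ, hψ⟩ := span_X_eq_ker (K := K) i
  rw [hψ]
  exact RingHom.ker_isPrime _

end VarPrime

section AssPrime

variable {K : Type*} [Field K] {σ : Type*} {ι : Type*}

lemma ann_span_mk {R : Type*} [CommRing R] (J : Ideal R) (g : R) :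
    (Submodule.span R {(Ideal.Quotient.mk J g : R ⧸ J)}).annihilator
      = Submodule.colon J (Ideal.span {g}) := by
  ext r
  rw [Submodule.mem_annihilator_span_singleton, Ideal.mem_colon_span_singleton]
  have hsmul : r • (Ideal.Quotient.mk J g : R ⧸ J) = Ideal.Quotient.mk J (r * g) := rfl
  rw [hsmul, Ideal.Quotient.eq_zero_iff_mem]

lemma bot_colon_mk {R : Type*} [CommRing R] (J : Ideal R) (g : R) :
    Submodule.colon (⊥ : Submodule R (R ⧸ J)) {(Ideal.Quotient.mk J g : R ⧸ J)}
      = Submodule.colon J (Ideal.span {g}) := by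
  ext r
  rw [Submodule.mem_colon_singleton, Submodule.mem_bot, Ideal.mem_colon_span_singleton]
  show Ideal.Quotient.mk J (r * g) = 0 ↔ _
  exact Ideal.Quotient.eq_zero_iff_mem

lemma colon_le_span_X (i : ι → σ) (w : σ → ℕ) (D : ℕ)
    (hw : ∀ s, (¬ ∃ l, i l = s) → w s = 0)
    (g h : MvPolynomial σ K) (hg : g ∉ weightIdeal K σ w D)
    (hh : h * g ∈ weightIdeal K σ w D) :
    h ∈ Ideal.span (Set.range fun l => (X (i l) : MvPolynomial σ K)) := by
  by_contra hcon
  rw [mem_span_X_iff] at hcon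
  push_neg at hcon
  obtain ⟨bh, hbh, hbh0⟩ := hcon
  rw [mem_weightIdeal_iff] at hg
  push_neg at hg
  obtain ⟨bg, hbg, hbglt⟩ := hg
  have hgne : g ≠ 0 := by rintro rfl; simp at hbg
  have hhne : h ≠ 0 := by rintro rfl; simp at hbh
  have hχg : (chiMap w g) ≠ 0 := chiMap_ne_zero w g hgne
  have hχh : (chiMap w h) ≠ 0 := chiMap_ne_zero w h hhne
  have hg_td : (chiMap w g).natTrailingDegree < D := by
    have h1 : (chiMap w g).coeff (wsum w bg) ≠ 0 := by
      intro h0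
      have := chiMap_coeff_coeff w g bg
      rw [h0, MvPolynomial.coeff_zero] at this
      exact MvPolynomial.mem_support_iff.1 hbg this.symm
    exact lt_of_le_of_lt (Polynomial.natTrailingDegree_le_of_ne_zero h1) hbglt
  have hwh : wsum w bh = 0 := by
    unfold wsum
    rw [Finsupp.sum]
    apply Finset.sum_eq_zero
    intro s hs
    have hws : w s = 0 := by
      apply hw s
      rintro ⟨l, rfl⟩
      exact Finsupp.mem_support_iff.1 hs (hbh0 l)
    rw [hws, mul_zero]
  have hh_td : (chiMap w h).natTrailingDegree = 0 := by
    have h1 : (chiMap w h).coeff 0 ≠ 0 := by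
      intro h0
      have := chiMap_coeff_coeff w h bh
      rw [hwh, h0, MvPolynomial.coeff_zero] at this
      exact MvPolynomial.mem_support_iff.1 hbh this.symm
    exact Nat.eq_zero_of_le_zero (Polynomial.natTrailingDegree_le_of_ne_zero h1)
  have hdvd : Polynomial.X ^ D ∣ chiMap w (h * g) := chiMap_dvd_of w D _ hh
  rw [_root_.map_mul] at hdvd
  have hne : chiMap w h * chiMap w g ≠ 0 := mul_ne_zero hχh hχg
  have hD_le : D ≤ (chiMap w h * chiMap w g).natTrailingDegree := by
    by_contra hlt
    push_neg at hlt
    have h0 : (chiMap w h * chiMap w g).coeff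
        ((chiMap w h * chiMap w g).natTrailingDegree) = 0 :=
      Polynomial.X_pow_dvd_iff.1 hdvd _ hlt
    have := Polynomial.trailingCoeff_nonzero_iff_nonzero.2 hne
    rw [Polynomial.trailingCoeff] at this
    exact this h0
  rw [Polynomial.natTrailingDegree_mul hχh hχg, hh_td, zero_add] at hD_le
  exact absurd hD_le (not_le.2 hg_td)

lemma ass_eq_span_X (i : ι → σ) (w : σ → ℕ) (D : ℕ)
    (hw : ∀ s, (¬ ∃ l, i l = s) → w s = 0)
    (J : Ideal (MvPolynomial σ K)) (hJ : J = weightIdeal K σ w D)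
    (hXpow : ∀ l, ∃ m : ℕ, (X (i l) : MvPolynomial σ K) ^ m ∈ J)
    (Q : Ideal (MvPolynomial σ K))
    (hQ : Q ∈ associatedPrimes (MvPolynomial σ K) (MvPolynomial σ K ⧸ J)) :
    Q = Ideal.span (Set.range fun l => (X (i l) : MvPolynomial σ K)) := by
  obtain ⟨hprime, x, hx⟩ := hQ
  obtain ⟨g, rfl⟩ := Ideal.Quotient.mk_surjective x
  rw [bot_colon_mk] at hx
  have hgJ : g ∉ J := by
    intro hgJ
    have htop : Submodule.colon J (Ideal.span {g}) = ⊤ := by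
      rw [eq_top_iff]
      intro r _
      rw [Ideal.mem_colon_span_singleton]
      exact Ideal.mul_mem_left J r hgJ
    rw [htop, Ideal.radical_top] at hx
    exact hprime.ne_top hx
  apply le_antisymm
  · have hle : Submodule.colon J (Ideal.span {g}) ≤
        Ideal.span (Set.range fun l => (X (i l) : MvPolynomial σ K)) := by
      intro h hh
      rw [Ideal.mem_colon_span_singleton] at hh
      rw [hJ] at hh hgJ
      exact colon_le_span_X i w D hw g h hgJ hh
    rw [hx]
    exact (Ideal.radical_mono hle).trans (span_X_isPrime i).radical.le
  · rw [Ideal.span_le]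
    rintro y ⟨l, rfl⟩
    obtain ⟨m, hm⟩ := hXpow l
    have hJQ : J ≤ Q := by
      intro u hu
      rw [hx]
      apply Ideal.le_radical
      rw [Ideal.mem_colon_span_singleton]
      exact Ideal.mul_mem_right g J hu
    exact SetLike.mem_coe.2 (hprime.mem_of_pow_mem m (hJQ hm))

lemma span_X_mem_ass (i : ι → σ) (J : Ideal (MvPolynomial σ K)) (f₀ : MvPolynomial σ K)
    (h1 : Submodule.colon J (Ideal.span {f₀}) =
      Ideal.span (Set.range fun l => (X (i l) : MvPolynomial σ K))) :
    Ideal.span (Set.range fun l => (X (i l) : MvPolynomial σ K)) ∈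
      associatedPrimes (MvPolynomial σ K) (MvPolynomial σ K ⧸ J) := by
  exact ⟨span_X_isPrime i, Ideal.Quotient.mk J f₀, by rw [bot_colon_mk, h1, (span_X_isPrime i).radical]⟩

end AssPrime

section Specific

variable {K : Type*} [Field K] {σ : Type*} {κ : ℕ}

/-- `u l = ∏_{m ≠ l} a m`. -/
def uwt (a : Fin κ → ℕ) (l : Fin κ) : ℕ := ∏ m ∈ Finset.univ.erase l, a m

open Classical in
/-- weight function on variables -/
noncomputable def wfun (i : Fin κ → σ) (a : Fin κ → ℕ) : σ → ℕ :=
  fun s => ∑ l, if i l = s then uwt a l else 0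

/-- weighted degree of an exponent vector, computed over the distinguished variables -/
def wtv (i : Fin κ → σ) (a : Fin κ → ℕ) (b : σ →₀ ℕ) : ℕ := ∑ l, b (i l) * uwt a l

lemma a_mul_uwt (a : Fin κ → ℕ) (l : Fin κ) : a l * uwt a l = ∏ m, a m :=
  Finset.mul_prod_erase Finset.univ a (Finset.mem_univ l)

lemma wfun_apply {i : Fin κ → σ} (hi : Function.Injective i) (a : Fin κ → ℕ) (p : Fin κ) :
    wfun i a (i p) = uwt a p := by
  classical
  unfold wfun
  rw [Finset.sum_congr rfl (fun l _ => if_congr hi.eq_iff rfl rfl)]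
  rw [Finset.sum_ite_eq' Finset.univ p (fun l => uwt a l)]
  simp

lemma wfun_eq_zero {i : Fin κ → σ} (a : Fin κ → ℕ) (s : σ) (hs : ¬ ∃ l, i l = s) :
    wfun i a s = 0 := by
  classical
  unfold wfun
  push_neg at hs
  exact Finset.sum_eq_zero fun l _ => if_neg (hs l)

lemma wsum_wfun_eq {i : Fin κ → σ} (hi : Function.Injective i) (a : Fin κ → ℕ) (b : σ →₀ ℕ) :
    wsum (wfun i a) b = wtv i a b := by
  classical
  unfold wsum wtv
  rw [Finsupp.sum]
  have h1 : ∀ s ∈ b.support, b s * wfun i a s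
      = ∑ l, if i l = s then b s * uwt a l else 0 := by
    intro s _
    unfold wfun
    rw [Finset.mul_sum]
    exact Finset.sum_congr rfl fun l _ => by rw [mul_ite, mul_zero]
  rw [Finset.sum_congr rfl h1, Finset.sum_comm]
  apply Finset.sum_congr rfl
  intro l _
  rw [Finset.sum_ite_eq b.support (i l) (fun s => b s * uwt a l)]
  by_cases h : i l ∈ b.support
  · rw [if_pos h]
  · rw [if_neg h]
    rw [Finsupp.notMem_support_iff.1 h, zero_mul]

lemma wtv_add (i : Fin κ → σ) (a : Fin κ → ℕ) (b b' : σ →₀ ℕ) :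
    wtv i a (b + b') = wtv i a b + wtv i a b' := by
  unfold wtv
  rw [← Finset.sum_add_distrib]
  exact Finset.sum_congr rfl fun l _ => by rw [Finsupp.add_apply, add_mul]

lemma wtv_single {i : Fin κ → σ} (hi : Function.Injective i) (a : Fin κ → ℕ) (p : Fin κ)
    (m : ℕ) : wtv i a (Finsupp.single (i p) m) = m * uwt a p := by
  classical
  unfold wtv
  have h1 : ∀ l, (Finsupp.single (i p) m) (i l) * uwt a l
      = if l = p then m * uwt a l else 0 := by
    intro l
    rw [Finsupp.single_apply]
    by_cases h : l = p
    · subst h; rw [if_pos rfl, if_pos rfl]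
    · rw [if_neg (fun hh => h (hi hh).symm), if_neg h, zero_mul]
  rw [Finset.sum_congr rfl (fun l _ => h1 l)]
  rw [Finset.sum_ite_eq' Finset.univ p (fun l => m * uwt a l)]
  simp

lemma prod_monomial_one {R : Type*} [CommSemiring R] {τ : Type*} {ι' : Type*} [DecidableEq ι']
    (s : Finset ι') (d : ι' → (τ →₀ ℕ)) :
    (∏ l ∈ s, (monomial (d l) (1 : R))) = monomial (∑ l ∈ s, d l) 1 := by
  induction s using Finset.induction with
  | empty => simp [MvPolynomial.monomial_zero']
  | insert _ _ h ih =>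
    rw [Finset.prod_insert h, Finset.sum_insert h, ih, MvPolynomial.monomial_mul, mul_one]

lemma monomial_mem_intClosure {i : Fin κ → σ} (hi : Function.Injective i) {a : Fin κ → ℕ}
    (ha : ∀ l, 1 ≤ a l) {n : ℕ} (b : σ →₀ ℕ)
    (hb : n * (∏ m, a m) ≤ wtv i a b) :
    (monomial b 1 : MvPolynomial σ K) ∈
      intClosure ((Ideal.span (Set.range fun p => (X (i p) : MvPolynomial σ K) ^ a p)) ^ n) := by
  classical
  set I := Ideal.span (Set.range fun p => (X (i p) : MvPolynomial σ K) ^ a p) with hIdef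
  set A := ∏ m, a m with hAdef
  have hA : 0 < A := Finset.prod_pos fun l _ => ha l
  set z := (monomial b 1 : MvPolynomial σ K) with hzdef
  apply Ideal.subset_span
  refine ⟨A, hA, fun q => if q = A then -(z ^ A) else 0, ?_, ?_⟩
  · intro q hq
    show (if q = A then -(z ^ A) else 0) ∈ (I ^ n) ^ q
    by_cases h : q = A
    · subst h
      rw [if_pos rfl]
      apply neg_mem
      have hpow : (I ^ n) ^ A = I ^ (n * A) := (pow_mul I n A).symm
      rw [hpow]
      have hzA : z ^ A = monomial (A • b) 1 := by
        rw [hzdef, MvPolynomial.monomial_pow, one_pow]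
      set s₀ : σ →₀ ℕ := ∑ l, Finsupp.single (i l) (A * b (i l)) with hs₀
      have hg : (∏ l, ((X (i l) : MvPolynomial σ K) ^ a l) ^ (b (i l) * uwt a l))
          = monomial s₀ 1 := by
        rw [hs₀]
        rw [← prod_monomial_one]
        apply Finset.prod_congr rfl
        intro l _
        rw [← pow_mul, MvPolynomial.X_pow_eq_monomial]
        have harg : a l * (b (i l) * uwt a l) = A * b (i l) := by
          rw [hAdef, ← a_mul_uwt a l]; ring
        rw [harg]
      have hgmem : (∏ l, ((X (i l) : MvPolynomial σ K) ^ a l) ^ (b (i l) * uwt a l))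
          ∈ I ^ (n * A) := by
        have h1 := aux_prod_pow_mem I (fun l => (X (i l) : MvPolynomial σ K) ^ a l)
          (fun l => b (i l) * uwt a l) Finset.univ
          (fun l _ => Ideal.subset_span ⟨l, rfl⟩)
        exact Ideal.pow_le_pow_right hb h1
      have hle : s₀ ≤ A • b := by
        rw [Finsupp.le_def]
        intro s
        rw [hs₀]
        rw [Finsupp.finset_sum_apply]
        by_cases hex : ∃ p, i p = s
        · obtain ⟨p, rfl⟩ := hex
          have h2 : ∀ l, (Finsupp.single (i l) (A * b (i l))) (i p)
              = if l = p then A * b (i l) else 0 := by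
            intro l
            rw [Finsupp.single_apply]
            by_cases h : l = p
            · subst h; rw [if_pos rfl, if_pos rfl]
            · rw [if_neg (fun hh => h (hi hh)), if_neg h]
          rw [Finset.sum_congr rfl (fun l _ => h2 l),
            Finset.sum_ite_eq' Finset.univ p (fun l => A * b (i l)), if_pos (Finset.mem_univ p)]
          rw [Finsupp.smul_apply, smul_eq_mul]
        · push_neg at hex
          have h2 : ∀ l, (Finsupp.single (i l) (A * b (i l))) s = 0 := by
            intro l
            rw [Finsupp.single_apply, if_neg (hex l)]
          rw [Finset.sum_congr rfl (fun l _ => h2 l), Finset.sum_const_zero]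
          exact Nat.zero_le _
      have hsplit : z ^ A = (∏ l, ((X (i l) : MvPolynomial σ K) ^ a l) ^ (b (i l) * uwt a l))
          * monomial (A • b - s₀) 1 := by
        rw [hg, MvPolynomial.monomial_mul, mul_one, add_tsub_cancel_of_le hle, hzA]
      rw [hsplit]
      exact Ideal.mul_mem_right _ _ hgmem
    · rw [if_neg h]
      exact Submodule.zero_mem _
  · have hsum : ∑ q ∈ Finset.Icc 1 A, (if q = A then -(z ^ A) else 0) * z ^ (A - q)
        = -(z ^ A) := by
      have h1 : ∀ q ∈ Finset.Icc 1 A, (if q = A then -(z ^ A) else 0) * z ^ (A - q)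
          = if q = A then -(z ^ A) * z ^ (A - q) else 0 := by
        intro q _
        rw [ite_mul, zero_mul]
      rw [Finset.sum_congr rfl h1,
        Finset.sum_ite_eq' (Finset.Icc 1 A) A (fun q => -(z ^ A) * z ^ (A - q))]
      rw [if_pos (Finset.mem_Icc.2 ⟨hA, le_refl A⟩), Nat.sub_self, pow_zero, mul_one]
    rw [hsum, add_neg_cancel]

lemma weightIdeal_le_intClosure {i : Fin κ → σ} (hi : Function.Injective i) {a : Fin κ → ℕ}
    (ha : ∀ l, 1 ≤ a l) {n : ℕ} :
    weightIdeal K σ (wfun i a) (n * (∏ m, a m)) ≤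
      intClosure ((Ideal.span (Set.range fun p => (X (i p) : MvPolynomial σ K) ^ a p)) ^ n) := by
  intro f hf
  rw [mem_weightIdeal_iff] at hf
  suffices h : ∑ b ∈ f.support, monomial b (coeff b f) ∈
      intClosure ((Ideal.span (Set.range fun p => (X (i p) : MvPolynomial σ K) ^ a p)) ^ n) by
    rwa [support_sum_monomial_coeff] at h
  apply Ideal.sum_mem
  intro b hb
  have h1 : (monomial b (coeff b f) : MvPolynomial σ K) = C (coeff b f) * monomial b 1 := by
    rw [MvPolynomial.C_mul_monomial, mul_one]
  rw [h1]
  apply Ideal.mul_mem_left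
  apply monomial_mem_intClosure hi ha b
  have := hf b hb
  rwa [wsum_wfun_eq hi] at this

end Specific

section Arith

lemma arith_bound (u0 uK a0 ak A n e x y : ℕ)
    (h1 : u0 * a0 = A) (h2 : uK * ak = A) (hA : 1 ≤ A)
    (ha0 : 1 ≤ a0) (hak : a0 ≤ ak) (hn : 1 ≤ n)
    (he1 : ak ≤ e * a0) (he2 : e * a0 < ak + a0)
    (hlow : n * A ≤ x * u0 + y * uK + uK)
    (hup : x * u0 + y * uK < n * A) :
    n * a0 + e ≤ x + y + 2 := by
  have hu0 : 1 ≤ u0 := by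
    rcases Nat.eq_zero_or_pos u0 with h | h
    · rw [h, zero_mul] at h1; omega
    · exact h
  have hak1 : 1 ≤ ak := le_trans ha0 hak
  have hx : x < n * a0 := by
    have hx1 : x * u0 < (n * a0) * u0 := by
      have : n * A = (n * a0) * u0 := by rw [← h1]; ring
      linarith [Nat.zero_le (y * uK)]
    exact Nat.lt_of_mul_lt_mul_right hx1
  obtain ⟨s, hs⟩ : ∃ s, x + s + 1 = n * a0 := ⟨n * a0 - x - 1, by omega⟩
  have h3 : (s + 1) * u0 ≤ (y + 1) * uK := by
    have e1 : n * A = x * u0 + (s + 1) * u0 := by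
      have : n * A = (n * a0) * u0 := by rw [← h1]; ring
      rw [this, ← hs]; ring
    have e2 : (y + 1) * uK = y * uK + uK := by ring
    linarith
  have h5 : (s + 1) * ak ≤ (y + 1) * a0 := by
    have h4 : u0 * ((s + 1) * ak) ≤ u0 * ((y + 1) * a0) := by
      have h41 := Nat.mul_le_mul_right ak h3
      calc u0 * ((s + 1) * ak) = (s + 1) * u0 * ak := by ring
      _ ≤ (y + 1) * uK * ak := h41
      _ = (y + 1) * (uK * ak) := by ring
      _ = (y + 1) * (u0 * a0) := by rw [h2, ← h1]
      _ = u0 * ((y + 1) * a0) := by ring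
    exact Nat.le_of_mul_le_mul_left h4 hu0
  have h6 : e + s ≤ y + 1 := by
    have h61 : (e + s) * a0 < (y + 2) * a0 := by
      have hsak : s * a0 ≤ s * ak := Nat.mul_le_mul_left s hak
      calc (e + s) * a0 = e * a0 + s * a0 := by ring
      _ < ak + a0 + s * ak := by linarith
      _ = (s + 1) * ak + a0 := by ring
      _ ≤ (y + 1) * a0 + a0 := by linarith
      _ = (y + 2) * a0 := by ring
    have := Nat.lt_of_mul_lt_mul_right h61
    omega
  omega

end Arith

section Blocks

variable {K : Type*} [Field K] {σ : Type*} {κ : ℕ}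

lemma wtv_blocks (i : Fin κ → σ) (a : Fin κ → ℕ) (t : ℕ)
    (u0 uK : ℕ)
    (hu0 : ∀ l : Fin κ, (l : ℕ) < t → uwt a l = u0)
    (huK : ∀ l : Fin κ, t ≤ (l : ℕ) → uwt a l = uK)
    (b : σ →₀ ℕ) :
    wtv i a b = (∑ l ∈ Finset.univ.filter (fun l : Fin κ => (l : ℕ) < t), b (i l)) * u0
      + (∑ l ∈ Finset.univ.filter (fun l : Fin κ => ¬ (l : ℕ) < t), b (i l)) * uK := by
  classical
  unfold wtv
  rw [← Finset.sum_filter_add_sum_filter_not Finset.univ (fun l : Fin κ => (l : ℕ) < t)]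
  rw [Finset.sum_mul, Finset.sum_mul]
  congr 1
  · apply Finset.sum_congr rfl
    intro l hl
    rw [hu0 l (Finset.mem_filter.1 hl).2]
  · apply Finset.sum_congr rfl
    intro l hl
    rw [huK l (le_of_not_gt (Finset.mem_filter.1 hl).2)]

lemma chiMap_X (w : σ → ℕ) (s : σ) :
    chiMap (K := K) w (X s) = Polynomial.C (X s) * Polynomial.X ^ w s := by
  unfold chiMap
  rw [MvPolynomial.eval₂Hom_X']

lemma map_chi_pow_le (i : Fin κ → σ) (hi : Function.Injective i) (a : Fin κ → ℕ) (n : ℕ) :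
    Ideal.map (chiMap (wfun i a))
        ((Ideal.span (Set.range fun p => (X (i p) : MvPolynomial σ K) ^ a p)) ^ n) ≤
      Ideal.span {(Polynomial.X : Polynomial (MvPolynomial σ K)) ^ (n * ∏ m, a m)} := by
  rw [Ideal.map_pow]
  have h1 : Ideal.map (chiMap (wfun i a))
      (Ideal.span (Set.range fun p => (X (i p) : MvPolynomial σ K) ^ a p)) ≤
      Ideal.span {(Polynomial.X : Polynomial (MvPolynomial σ K)) ^ (∏ m, a m)} := by
    rw [Ideal.map_span, Ideal.span_le]
    rintro q hq
    obtain ⟨r, ⟨p, rfl⟩, rfl⟩ := hq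
    rw [SetLike.mem_coe, Ideal.mem_span_singleton]
    rw [map_pow, chiMap_X, mul_pow, ← pow_mul, wfun_apply hi]
    have : uwt a p * a p = ∏ m, a m := by rw [← a_mul_uwt a p]; ring
    rw [this]
    exact Dvd.dvd.mul_left dvd_rfl _
  calc (Ideal.map (chiMap (wfun i a))
      (Ideal.span (Set.range fun p => (X (i p) : MvPolynomial σ K) ^ a p))) ^ n
      ≤ (Ideal.span {(Polynomial.X : Polynomial (MvPolynomial σ K)) ^ (∏ m, a m)}) ^ n :=
        Ideal.pow_right_mono h1 n
  _ = Ideal.span {(Polynomial.X : Polynomial (MvPolynomial σ K)) ^ (n * ∏ m, a m)} := by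
      rw [Ideal.span_singleton_pow, ← pow_mul, mul_comm]

end Blocks


set_option maxHeartbeats 1000000 in
/-- If `I = ⟨x_{i_1}^{a_1},…,x_{i_k}^{a_k}⟩` with `1 ≤ a_1 ≤ ⋯ ≤ a_k`, `k ≥ 2`
(here `k = k'+2`), and there is `j ≥ 2` with `a_1 = ⋯ = a_{j−1} ≤ a_j = ⋯ = a_k`
(0-indexed: all entries below `j` equal `a 0` and all entries from `j` on equal the last one),
then `v(closure(I^n)) = n·a_1 + ⌈a_k/a_1⌉ − 2` for all `n ≥ 1`. -/
theorem vnumber_intClosure_pow_two_blocks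
    {K : Type*} [Field K] {σ : Type*} (k' : ℕ) (i : Fin (k' + 2) → σ)
    (hi : Function.Injective i)
    (a : Fin (k' + 2) → ℕ) (ha1 : 1 ≤ a 0) (hmono : Monotone a)
    (j : Fin (k' + 2)) (hj : 1 ≤ (j : ℕ))
    (hblock1 : ∀ p : Fin (k' + 2), (p : ℕ) < (j : ℕ) → a p = a 0)
    (hblock2 : ∀ p : Fin (k' + 2), (j : ℕ) ≤ (p : ℕ) → a p = a (Fin.last (k' + 1)))
    (I : Ideal (MvPolynomial σ K))
    (hI : I = Ideal.span (Set.range fun p => (X (i p) : MvPolynomial σ K) ^ a p))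
    (n : ℕ) (hn : 1 ≤ n) :
    (vnumber (intClosure (I ^ n)) : ℤ)
      = (n : ℤ) * a 0 + ⌈(a (Fin.last (k' + 1)) : ℚ) / (a 0 : ℚ)⌉ - 2 := by
  classical
  subst hI
  set I' := Ideal.span (Set.range fun p => (X (i p) : MvPolynomial σ K) ^ a p) with hI'def
  set A := ∏ m, a m with hAdef
  set a0 := a 0 with ha0def
  set ak := a (Fin.last (k' + 1)) with hakdef
  set e := (ak + a0 - 1) / a0 with hedef
  set w := wfun i a with hwdef
  set D := n * A with hDdef
  set J := intClosure (I' ^ n) with hJdef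
  set M := weightIdeal K σ w D with hMdef
  set P := Ideal.span (Set.range fun l => (X (i l) : MvPolynomial σ K)) with hPdef
  set u0 := uwt a 0 with hu0def
  set uK := uwt a (Fin.last (k' + 1)) with huKdef
  -- basic numeric facts
  have ha : ∀ l, 1 ≤ a l := fun l => le_trans ha1 (hmono (Fin.zero_le l))
  have hA1 : 0 < A := by rw [hAdef]; exact Finset.prod_pos fun l _ => ha l
  have ha0ak : a0 ≤ ak := hmono (Fin.zero_le (Fin.last (k' + 1)))
  have hak1 : 1 ≤ ak := le_trans ha1 ha0ak
  have hS : ak + a0 - 1 + 1 = ak + a0 := by omega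
  have he2 : e * a0 < ak + a0 := by
    have h1 : e * a0 ≤ ak + a0 - 1 := Nat.div_mul_le_self _ _
    omega
  have he1 : ak ≤ e * a0 := by
    have h1 := Nat.div_add_mod (ak + a0 - 1) a0
    have h2 : (ak + a0 - 1) % a0 < a0 := Nat.mod_lt _ (by omega)
    have h3 : e * a0 = a0 * e := Nat.mul_comm _ _
    rw [← hedef] at h1
    linarith [h1, h2, hS, h3]
  have he0 : 1 ≤ e := by
    rw [hedef]
    rw [Nat.one_le_div_iff (by omega)]
    omega
  have hu0A : u0 * a0 = A := by
    rw [hu0def, ha0def, hAdef, mul_comm]; exact a_mul_uwt a 0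
  have huKA : uK * ak = A := by
    rw [huKdef, hakdef, hAdef, mul_comm]; exact a_mul_uwt a (Fin.last (k' + 1))
  have hu0pos : 0 < u0 := by
    rcases Nat.eq_zero_or_pos u0 with h | h
    · rw [h, zero_mul] at hu0A; omega
    · exact h
  have huKpos : 0 < uK := by
    rcases Nat.eq_zero_or_pos uK with h | h
    · rw [h, zero_mul] at huKA; omega
    · exact h
  have hu0eq : ∀ l : Fin (k' + 2), (l : ℕ) < (j : ℕ) → uwt a l = u0 := by
    intro l hl
    have h1 : a l = a 0 := hblock1 l hl
    have h2 : a l * uwt a l = a 0 * uwt a 0 := by rw [a_mul_uwt, a_mul_uwt]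
    rw [h1] at h2
    exact Nat.eq_of_mul_eq_mul_left (by rw [← ha0def]; omega) h2
  have huKeq : ∀ l : Fin (k' + 2), (j : ℕ) ≤ (l : ℕ) → uwt a l = uK := by
    intro l hl
    have h1 : a l = a (Fin.last (k' + 1)) := hblock2 l hl
    have h2 : a l * uwt a l = a (Fin.last (k' + 1)) * uwt a (Fin.last (k' + 1)) := by
      rw [a_mul_uwt, a_mul_uwt]
    rw [h1] at h2
    exact Nat.eq_of_mul_eq_mul_left (by rw [← hakdef]; omega) h2
  have hq2 : u0 ≤ e * uK := by
    have h1 : u0 * ak ≤ (e * uK) * ak := by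
      calc u0 * ak ≤ u0 * (e * a0) := Nat.mul_le_mul_left u0 he1
      _ = e * (u0 * a0) := by ring
      _ = e * A := by rw [hu0A]
      _ = e * (uK * ak) := by rw [huKA]
      _ = (e * uK) * ak := by ring
    exact Nat.le_of_mul_le_mul_right h1 (by omega)
  have hee : e - 1 + 1 = e := by omega
  have hsub : (e - 1) * a0 + a0 = e * a0 := by
    calc (e - 1) * a0 + a0 = ((e - 1) + 1) * a0 := by ring
    _ = e * a0 := by rw [hee]
  have h0ak : (e - 1) * a0 < ak := by linarith [hsub, he2]
  have hq1 : (e - 1) * uK < u0 := by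
    have h1 : ((e - 1) * uK) * ak < u0 * ak := by
      calc ((e - 1) * uK) * ak = (e - 1) * (uK * ak) := by ring
      _ = (e - 1) * A := by rw [huKA]
      _ = (e - 1) * (u0 * a0) := by rw [hu0A]
      _ = u0 * ((e - 1) * a0) := by ring
      _ < u0 * ak := mul_lt_mul_of_pos_left h0ak hu0pos
    exact Nat.lt_of_mul_lt_mul_right h1
  have hna : 1 ≤ n * a0 := by
    calc 1 = 1 * 1 := by ring
    _ ≤ n * a0 := Nat.mul_le_mul hn (by omega)
  have hna1 : n * a0 - 1 + 1 = n * a0 := by omega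
  have hDeq : D = (n * a0) * u0 := by
    rw [hDdef, ← hu0A]; ring
  -- the closure is the weight ideal
  have hJM : J = M := by
    rw [hJdef, hMdef]
    apply le_antisymm
    · apply intClosure_le_weightIdeal w D (I' ^ n)
      rw [hI'def, hwdef, hDdef, hAdef]
      exact map_chi_pow_le i hi a n
    · rw [hwdef, hDdef, hAdef, hI'def]
      exact weightIdeal_le_intClosure hi ha
  have hw0 : ∀ s, (¬ ∃ l, i l = s) → w s = 0 := fun s hs => wfun_eq_zero a s hs
  have hXpow : ∀ l, ∃ m : ℕ, (X (i l) : MvPolynomial σ K) ^ m ∈ J := by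
    intro l
    refine ⟨n * a l, ?_⟩
    rw [hJM, hMdef]
    rw [MvPolynomial.X_pow_eq_monomial]
    rw [mem_weightIdeal_iff]
    intro b hb
    rw [MvPolynomial.support_monomial, if_neg (one_ne_zero)] at hb
    rw [Finset.mem_singleton] at hb
    subst hb
    rw [hwdef, wsum_wfun_eq hi, wtv_single hi]
    have h1 : (n * a l) * uwt a l = n * A := by
      rw [hAdef, ← a_mul_uwt a l]; ring
    rw [h1, ← hDdef]
  -- the witness monomial
  set b₀ : σ →₀ ℕ := Finsupp.single (i 0) (n * a0 - 1)
    + Finsupp.single (i (Fin.last (k' + 1))) (e - 1) with hb₀def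
  set f₀ : MvPolynomial σ K := monomial b₀ 1 with hf₀def
  have hwtb₀ : wtv i a b₀ = (n * a0 - 1) * u0 + (e - 1) * uK := by
    rw [hb₀def, wtv_add, wtv_single hi, wtv_single hi, hu0def, huKdef]
  have hwtb₀lt : wtv i a b₀ < D := by
    rw [hwtb₀]
    have h1 : (n * a0 - 1) * u0 + u0 = (n * a0) * u0 := by
      calc (n * a0 - 1) * u0 + u0 = ((n * a0 - 1) + 1) * u0 := by ring
      _ = (n * a0) * u0 := by rw [hna1]
    rw [hDeq]
    linarith [hq1]
  have hf₀M : f₀ ∉ M := by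
    intro hmem
    rw [hMdef, mem_weightIdeal_iff] at hmem
    have h1 := hmem b₀ (by
      rw [hf₀def, MvPolynomial.support_monomial, if_neg (one_ne_zero)]
      exact Finset.mem_singleton_self _)
    rw [hwdef, wsum_wfun_eq hi] at h1
    exact absurd h1 (not_le.2 hwtb₀lt)
  have hstep : ∀ l, (X (i l) : MvPolynomial σ K) * f₀ ∈ M := by
    intro l
    have hXmul : (X (i l) : MvPolynomial σ K) * f₀
        = monomial (Finsupp.single (i l) 1 + b₀) 1 := by
      rw [hf₀def, ← pow_one (X (i l) : MvPolynomial σ K), MvPolynomial.X_pow_eq_monomial,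
        MvPolynomial.monomial_mul, one_mul]
    rw [hXmul, hMdef, mem_weightIdeal_iff]
    intro b hb
    rw [MvPolynomial.support_monomial, if_neg (one_ne_zero), Finset.mem_singleton] at hb
    subst hb
    rw [hwdef, wsum_wfun_eq hi, wtv_add, wtv_single hi, one_mul, hwtb₀]
    by_cases hcase : (l : ℕ) < (j : ℕ)
    · rw [hu0eq l hcase]
      have h1 : u0 + (n * a0 - 1) * u0 = (n * a0) * u0 := by
        calc u0 + (n * a0 - 1) * u0 = ((n * a0 - 1) + 1) * u0 := by ring
        _ = (n * a0) * u0 := by rw [hna1]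
      rw [hDeq]
      linarith [h1, Nat.zero_le ((e - 1) * uK)]
    · rw [huKeq l (le_of_not_gt hcase)]
      have h1 : uK + ((n * a0 - 1) * u0 + (e - 1) * uK) = (n * a0 - 1) * u0 + e * uK := by
        calc uK + ((n * a0 - 1) * u0 + (e - 1) * uK)
            = (n * a0 - 1) * u0 + ((e - 1) + 1) * uK := by ring
        _ = (n * a0 - 1) * u0 + e * uK := by rw [hee]
      have h2 : (n * a0 - 1) * u0 + u0 = (n * a0) * u0 := by
        calc (n * a0 - 1) * u0 + u0 = ((n * a0 - 1) + 1) * u0 := by ring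
        _ = (n * a0) * u0 := by rw [hna1]
      rw [hDeq]
      linarith [h1, h2, hq2]
  have hcolon : Submodule.colon J (Ideal.span {f₀}) = P := by
    apply le_antisymm
    · intro h hh
      rw [Ideal.mem_colon_span_singleton] at hh
      rw [hJM, hMdef] at hh
      rw [hPdef]
      apply colon_le_span_X i w D hw0 f₀ h _ hh
      rw [← hMdef]
      exact hf₀M
    · rw [hPdef, Ideal.span_le]
      rintro x ⟨l, rfl⟩
      rw [SetLike.mem_coe, Ideal.mem_colon_span_singleton, hJM]
      exact hstep l
  have hassP : P ∈ associatedPrimes (MvPolynomial σ K) (MvPolynomial σ K ⧸ J) := by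
    rw [hPdef]
    apply span_X_mem_ass i J f₀
    rw [← hPdef]
    exact hcolon
  -- homogeneity of the witness
  have hdegb₀ : b₀.degree = n * a0 + e - 2 := by
    rw [hb₀def, Finsupp.degree_eq_weight_one, map_add]
    have h1 : ∀ (s : σ) (m : ℕ), Finsupp.weight (fun _ => 1 : σ → ℕ) (Finsupp.single s m) = m := by
      intro s m
      rw [Finsupp.weight_apply, Finsupp.sum_single_index]
      · simp
      · simp
    rw [h1, h1]
    omega
  have hhom : f₀.IsHomogeneous (n * a0 + e - 2) := by
    rw [hf₀def]
    exact isHomogeneous_monomial _ hdegb₀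
  -- compute the vnumber
  have hmemv : (n * a0 + e - 2) ∈ {d : ℕ | ∃ f : MvPolynomial σ K, f.IsHomogeneous d ∧
      Submodule.colon J (Ideal.span {f}) ∈
        associatedPrimes (MvPolynomial σ K) (MvPolynomial σ K ⧸ J)} := by
    exact ⟨f₀, hhom, by rw [hcolon]; exact hassP⟩
  have hlb : ∀ d ∈ {d : ℕ | ∃ f : MvPolynomial σ K, f.IsHomogeneous d ∧
      Submodule.colon J (Ideal.span {f}) ∈
        associatedPrimes (MvPolynomial σ K) (MvPolynomial σ K ⧸ J)},
      (n * a0 + e - 2) ≤ d := by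
    rintro d ⟨f, hfhom, hfass⟩
    have hQP : Submodule.colon J (Ideal.span {f}) = P := by
      rw [hPdef]
      exact ass_eq_span_X i w D hw0 J (by rw [hJM, hMdef]) hXpow _ hfass
    have hfJ : f ∉ J := by
      intro hfJ
      have htop : Submodule.colon J (Ideal.span {f}) = ⊤ := by
        rw [eq_top_iff]
        intro r _
        rw [Ideal.mem_colon_span_singleton]
        exact Ideal.mul_mem_left J r hfJ
      rw [htop] at hQP
      have := span_X_isPrime (K := K) i
      rw [← hPdef] at this
      exact this.ne_top hQP.symm
    have hXf : ∀ l, (X (i l) : MvPolynomial σ K) * f ∈ J := by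
      intro l
      have h1 : (X (i l) : MvPolynomial σ K) ∈ Submodule.colon J (Ideal.span {f}) := by
        rw [hQP, hPdef]
        exact Ideal.subset_span ⟨l, rfl⟩
      exact Ideal.mem_colon_span_singleton.1 h1
    rw [hJM, hMdef, mem_weightIdeal_iff] at hfJ
    push_neg at hfJ
    obtain ⟨b, hbsupp, hblt⟩ := hfJ
    rw [hwdef, wsum_wfun_eq hi] at hblt
    have hcon : ∀ l, D ≤ uwt a l + wtv i a b := by
      intro l
      have h1 := hXf l
      rw [hJM, hMdef, mem_weightIdeal_iff] at h1
      have hmem2 : Finsupp.single (i l) 1 + b ∈ ((X (i l) : MvPolynomial σ K) * f).support := by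
        rw [MvPolynomial.support_X_mul]
        exact Finset.mem_map.2 ⟨b, hbsupp, rfl⟩
      have h2 := h1 _ hmem2
      rw [hwdef, wsum_wfun_eq hi, wtv_add, wtv_single hi, one_mul] at h2
      exact h2
    set x := ∑ l ∈ Finset.univ.filter (fun l : Fin (k' + 2) => (l : ℕ) < (j : ℕ)), b (i l)
      with hxdef
    set y := ∑ l ∈ Finset.univ.filter (fun l : Fin (k' + 2) => ¬ (l : ℕ) < (j : ℕ)), b (i l)
      with hydef
    have hsplit : wtv i a b = x * u0 + y * uK := wtv_blocks i a (j : ℕ) u0 uK hu0eq huKeq b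
    have hjlast : (j : ℕ) ≤ ((Fin.last (k' + 1) : Fin (k' + 2)) : ℕ) := by
      rw [Fin.val_last]
      exact Fin.is_le j
    have hlow : D ≤ x * u0 + y * uK + uK := by
      have h1 := hcon (Fin.last (k' + 1))
      rw [huKeq _ hjlast, hsplit] at h1
      linarith
    have hup : x * u0 + y * uK < D := by
      rw [hsplit] at hblt
      exact hblt
    rw [hDdef] at hlow hup
    have harith := arith_bound u0 uK a0 ak A n e x y hu0A huKA hA1 (by omega) ha0ak hn
      he1 he2 hlow hup
    have hdeg : b.degree = d := by
      have h1 : coeff b f ≠ 0 := MvPolynomial.mem_support_iff.1 hbsupp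
      have h2 := hfhom h1
      rw [Finsupp.degree_eq_weight_one]
      exact h2
    have hxy : x + y ≤ d := by
      have h1 : x + y = ∑ l : Fin (k' + 2), b (i l) := by
        rw [hxdef, hydef]
        exact Finset.sum_filter_add_sum_filter_not _ _ _
      have h2 : ∑ l : Fin (k' + 2), b (i l) = ∑ s ∈ Finset.univ.image i, b s :=
        (Finset.sum_image (fun p _ q _ h => hi h)).symm
      have h3 : ∑ s ∈ Finset.univ.image i, b s
          ≤ ∑ s ∈ Finset.univ.image i ∪ b.support, b s :=
        Finset.sum_le_sum_of_subset Finset.subset_union_left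
      have h4 : ∑ s ∈ Finset.univ.image i ∪ b.support, b s = ∑ s ∈ b.support, b s :=
        (Finset.sum_subset Finset.subset_union_right
          (fun s _ hs => Finsupp.notMem_support_iff.1 hs)).symm
      have h5 : (Finsupp.degree b) = ∑ s ∈ b.support, b s := rfl
      rw [← hdeg, h5]
      omega
    have h6 : n * a0 + e ≤ d + 2 := by linarith
    omega
  have hvn : vnumber J = n * a0 + e - 2 := by
    rw [vnumber]
    exact le_antisymm (Nat.sInf_le hmemv) (le_csInf ⟨_, hmemv⟩ hlb)
  rw [hvn]
  have hceil : ⌈(ak : ℚ) / (a0 : ℚ)⌉ = (e : ℤ) := by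
    rw [Int.ceil_eq_iff]
    have ha0Q : (0 : ℚ) < (a0 : ℚ) := by exact_mod_cast (by omega : 0 < a0)
    constructor
    · rw [lt_div_iff₀ ha0Q]
      have hcast : ((e : ℤ) : ℚ) - 1 = (((e - 1 : ℕ) : ℚ)) := by
        push_cast [Nat.cast_sub he0]
        ring
      rw [hcast]
      exact_mod_cast h0ak
    · rw [div_le_iff₀ ha0Q]
      exact_mod_cast he1
  rw [hceil]
  have h2le : 2 ≤ n * a0 + e := by omega
  rw [show ((n * a0 + e - 2 : ℕ) : ℤ) = ((n * a0 + e : ℕ) : ℤ) - 2 from by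
    rw [Nat.cast_sub h2le]; push_cast; ring]
  push_cast
  ring
end

section
/- Let I = ⟨x_{i_1}^{a_1}, x_{i_2}^{a_2}, x_{i_3}^{a_3}⟩ with 1 ≤ a_1 ≤ a_2 ≤ a_3, let P = ⟨x_{i_1}, x_{i_2}, x_{i_3}⟩, and for 1 ≤ m ≤ a_1 define f_m = x_{i_1}^{a_1−m} · x_{i_2}^{⌈m a_2/a_1⌉−1} · x_{i_3}^{⌈(a_3/a_2)(m a_2/a_1 − ⌈m a_2/a_1⌉ + 1)⌉−1}. Then (\overline{I} : f_m) = P for all 1 ≤ m ≤ a_1. -/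
open MvPolynomial Ideal

/-- `⌈m a₂ / a₁⌉ − 1`, the exponent of the second variable in `f_m`. -/
noncomputable def expTwo (a1 a2 m : ℕ) : ℕ := (⌈((m : ℚ) * a2) / a1⌉ - 1).toNat

/-- `⌈(a₃/a₂)(m a₂/a₁ − ⌈m a₂/a₁⌉ + 1)⌉ − 1`, the exponent of the third variable in `f_m`. -/
noncomputable def expThree (a1 a2 a3 m : ℕ) : ℕ :=
  (⌈((a3 : ℚ) / a2) * (((m : ℚ) * a2) / a1 - ⌈((m : ℚ) * a2) / a1⌉ + 1)⌉ - 1).toNat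

/-- The exponent vector of the monomial
`f_m = x_{i_1}^{a_1−m} x_{i_2}^{⌈m a₂/a₁⌉−1} x_{i_3}^{⌈(a₃/a₂)(m a₂/a₁−⌈m a₂/a₁⌉+1)⌉−1}`. -/
noncomputable def fExp {σ : Type*} (i1 i2 i3 : σ) (a1 a2 a3 m : ℕ) : σ →₀ ℕ :=
  Finsupp.single i1 (a1 - m) + Finsupp.single i2 (expTwo a1 a2 m)
    + Finsupp.single i3 (expThree a1 a2 a3 m)



set_option maxHeartbeats 2000000

namespace ColonAux

open Polynomial

/-- Trailing bound: all coefficients below `k` vanish. -/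
def TB {R : Type*} [CommRing R] (k : ℕ) (p : Polynomial R) : Prop := ∀ d < k, p.coeff d = 0

variable {R : Type*} [CommRing R]

lemma TB_zero (k : ℕ) : TB k (0 : Polynomial R) := fun d _ => by simp

lemma TB_add {k : ℕ} {p q : Polynomial R} (hp : TB k p) (hq : TB k q) : TB k (p + q) :=
  fun d hd => by simp [Polynomial.coeff_add, hp d hd, hq d hd]

lemma TB_mul {j l : ℕ} {p q : Polynomial R} (hp : TB j p) (hq : TB l q) :
    TB (j + l) (p * q) := by
  intro d hd
  rw [Polynomial.coeff_mul]
  apply Finset.sum_eq_zero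
  rintro ⟨u, v⟩ huv
  rw [Finset.HasAntidiagonal.mem_antidiagonal] at huv
  simp only at huv ⊢
  by_cases hu : u < j
  · rw [hp u hu, zero_mul]
  · have : v < l := by omega
    rw [hq v this, mul_zero]

lemma TB_mul_left {k : ℕ} {p q : Polynomial R} (hp : TB k p) : TB k (q * p) := by
  have : TB 0 q := fun d hd => by omega
  simpa using TB_mul this hp

lemma TB_neg {k : ℕ} {p : Polynomial R} (hp : TB k p) : TB k (-p) :=
  fun d hd => by simp [hp d hd]

lemma ntd_pow [IsDomain R] {p : Polynomial R} (hp : p ≠ 0) (j : ℕ) :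
    (p ^ j).natTrailingDegree = j * p.natTrailingDegree := by
  induction j with
  | zero => simp
  | succ j ih =>
    rw [pow_succ, Polynomial.natTrailingDegree_mul (pow_ne_zero j hp) hp, ih]
    ring

lemma TB_of_integral_eq [IsDomain R] {p : Polynomial R} (hp : p ≠ 0)
    {n N : ℕ} (hn : 0 < n) {q : ℕ → Polynomial R}
    (hq : ∀ i ∈ Finset.Icc 1 n, TB (i * N) (q i))
    (heq : p ^ n + ∑ i ∈ Finset.Icc 1 n, q i * p ^ (n - i) = 0) :
    TB N p := by
  set τ := p.natTrailingDegree with hτdef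
  suffices h : N ≤ τ by
    intro d hd
    exact Polynomial.coeff_eq_zero_of_lt_natTrailingDegree (by omega)
  by_contra h
  push_neg at h   -- h : τ < N
  have hpn : (p ^ n) ≠ 0 := pow_ne_zero n hp
  have hcoeff : (p ^ n).coeff (n * τ) ≠ 0 := by
    have := Polynomial.coeff_natTrailingDegree_ne_zero.mpr hpn
    rwa [ntd_pow hp n] at this
  apply hcoeff
  have hsum : p ^ n = -∑ i ∈ Finset.Icc 1 n, q i * p ^ (n - i) := by
    linear_combination heq
  rw [hsum, Polynomial.coeff_neg, Polynomial.finset_sum_coeff]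
  rw [neg_eq_zero]
  apply Finset.sum_eq_zero
  intro i hi
  rw [Finset.mem_Icc] at hi
  have hTBp : TB ((n - i) * τ) (p ^ (n - i)) := by
    intro d hd
    refine Polynomial.coeff_eq_zero_of_lt_natTrailingDegree ?_
    rw [ntd_pow hp]
    exact hd
  have := TB_mul (hq i (Finset.mem_Icc.mpr hi)) hTBp
  apply this
  have h1 : 1 ≤ i := hi.1
  have h2 : i ≤ n := hi.2
  have : i * τ < i * N := mul_lt_mul_of_pos_left h (by omega)
  calc n * τ = i * τ + (n - i) * τ := by
        rw [← Nat.add_mul]; congr 1; omega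
    _ < i * N + (n - i) * τ := by omega

/-- The ideal of polynomials with trailing bound `k`. -/
def TBideal (R : Type*) [CommRing R] (k : ℕ) : Ideal (Polynomial R) where
  carrier := {p | TB k p}
  add_mem' := TB_add
  zero_mem' := TB_zero k
  smul_mem' := fun c x hx => by simpa [smul_eq_mul] using TB_mul_left (q := c) hx

lemma mem_TBideal {k : ℕ} {p : Polynomial R} : p ∈ TBideal R k ↔ TB k p := Iff.rfl

end ColonAux

namespace ColonAux

open Polynomial

section Weights

variable {K : Type*} [Field K] {σ : Type*}
variable (i1 i2 i3 : σ) (a1 a2 a3 : ℕ)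

/-- Integer weight of an exponent vector. -/
def W (b : σ →₀ ℕ) : ℕ := b i1 * (a2 * a3) + b i2 * (a1 * a3) + b i3 * (a1 * a2)

lemma W_add (b b' : σ →₀ ℕ) : W i1 i2 i3 a1 a2 a3 (b + b') =
    W i1 i2 i3 a1 a2 a3 b + W i1 i2 i3 a1 a2 a3 b' := by
  simp only [W, Finsupp.add_apply]; ring

/-- weights of the variables, as a finitely supported function -/
noncomputable def wtF : σ →₀ ℕ :=
  Finsupp.single i1 (a2 * a3) + Finsupp.single i2 (a1 * a3) + Finsupp.single i3 (a1 * a2)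

variable (h12 : i1 ≠ i2) (h13 : i1 ≠ i3) (h23 : i2 ≠ i3)

lemma wtF_eq_zero {j : σ} (hj1 : j ≠ i1) (hj2 : j ≠ i2) (hj3 : j ≠ i3) :
    wtF i1 i2 i3 a1 a2 a3 j = 0 := by
  simp [wtF, Finsupp.single_eq_of_ne' (Ne.symm hj1), Finsupp.single_eq_of_ne' (Ne.symm hj2),
    Finsupp.single_eq_of_ne' (Ne.symm hj3)]

include h12 h13 in
lemma wtF_i1 : wtF i1 i2 i3 a1 a2 a3 i1 = a2 * a3 := by
  simp [wtF, Finsupp.single_eq_of_ne (Ne.symm h12), Finsupp.single_eq_of_ne (Ne.symm h13),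
    Finsupp.single_eq_of_ne h12, Finsupp.single_eq_of_ne h13]

include h12 h23 in
lemma wtF_i2 : wtF i1 i2 i3 a1 a2 a3 i2 = a1 * a3 := by
  simp [wtF, Finsupp.single_eq_of_ne' h12, Finsupp.single_eq_of_ne' (Ne.symm h23),
    Finsupp.single_eq_of_ne' h23]

include h13 h23 in
lemma wtF_i3 : wtF i1 i2 i3 a1 a2 a3 i3 = a1 * a2 := by
  simp [wtF, Finsupp.single_eq_of_ne' h13, Finsupp.single_eq_of_ne' h23]

include h12 h13 h23 in
lemma sum_wt (b : σ →₀ ℕ) :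
    (b.sum fun j e => wtF i1 i2 i3 a1 a2 a3 j * e) = W i1 i2 i3 a1 a2 a3 b := by
  classical
  rw [Finsupp.sum]
  have hsub : b.support ⊆ b.support ∪ {i1, i2, i3} := Finset.subset_union_left
  rw [Finset.sum_subset hsub (fun j _ hj => by
    rw [Finsupp.notMem_support_iff.mp hj, mul_zero])]
  have hsub2 : ({i1, i2, i3} : Finset σ) ⊆ b.support ∪ {i1, i2, i3} :=
    Finset.subset_union_right
  rw [← Finset.sum_subset hsub2 (fun j _ hj => by
    simp only [Finset.mem_insert, Finset.mem_singleton, not_or] at hj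
    rw [wtF_eq_zero i1 i2 i3 a1 a2 a3 hj.1 hj.2.1 hj.2.2, zero_mul])]
  rw [Finset.sum_insert (by simp [h12, h13]), Finset.sum_insert (by simp [h23]),
    Finset.sum_singleton, wtF_i1 i1 i2 i3 a1 a2 a3 h12 h13, wtF_i2 i1 i2 i3 a1 a2 a3 h12 h23,
    wtF_i3 i1 i2 i3 a1 a2 a3 h13 h23, W]
  ring

/-- The regrading homomorphism. -/
noncomputable def phi : MvPolynomial σ K →+* Polynomial (MvPolynomial σ K) :=
  eval₂Hom ((Polynomial.C : MvPolynomial σ K →+* _).comp (MvPolynomial.C))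
    (fun j => Polynomial.C (MvPolynomial.X j) * Polynomial.X ^ (wtF i1 i2 i3 a1 a2 a3 j))

lemma phi_monomial (b : σ →₀ ℕ) (r : K) :
    phi i1 i2 i3 a1 a2 a3 (monomial b r) =
      Polynomial.C (monomial b r) *
        Polynomial.X ^ (b.sum fun j e => wtF i1 i2 i3 a1 a2 a3 j * e) := by
  classical
  rw [phi, coe_eval₂Hom, MvPolynomial.eval₂_monomial]
  rw [show (b.prod fun j e => (Polynomial.C (MvPolynomial.X j) *
        Polynomial.X ^ (wtF i1 i2 i3 a1 a2 a3 j)) ^ e) =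
      (b.prod fun j e => Polynomial.C ((MvPolynomial.X j : MvPolynomial σ K) ^ e)) *
      (b.prod fun j e => Polynomial.X ^ (wtF i1 i2 i3 a1 a2 a3 j * e)) by
    rw [Finsupp.prod, Finsupp.prod, Finsupp.prod, ← Finset.prod_mul_distrib]
    apply Finset.prod_congr rfl
    intro j _
    rw [mul_pow, ← map_pow, pow_mul]]
  rw [show (b.prod fun j e => Polynomial.C ((MvPolynomial.X j : MvPolynomial σ K) ^ e)) =
      Polynomial.C (b.prod fun j e => (MvPolynomial.X j : MvPolynomial σ K) ^ e) by
    rw [Finsupp.prod, Finsupp.prod]; exact (map_prod _ _ _).symm]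
  rw [show (b.prod fun j e => (Polynomial.X : Polynomial (MvPolynomial σ K)) ^
        (wtF i1 i2 i3 a1 a2 a3 j * e)) =
      Polynomial.X ^ (b.sum fun j e => wtF i1 i2 i3 a1 a2 a3 j * e) by
    rw [Finsupp.prod, Finsupp.sum]; exact Finset.prod_pow_eq_pow_sum _ _ _]
  rw [RingHom.comp_apply, ← mul_assoc, ← _root_.map_mul Polynomial.C, ← MvPolynomial.monomial_eq]

include h12 h13 h23 in
lemma phi_eq_sum (f : MvPolynomial σ K) :
    phi i1 i2 i3 a1 a2 a3 f = ∑ b ∈ f.support,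
      Polynomial.C (monomial b (coeff b f)) * Polynomial.X ^ (W i1 i2 i3 a1 a2 a3 b) := by
  conv_lhs => rw [f.as_sum, map_sum]
  apply Finset.sum_congr rfl
  intro b _
  rw [phi_monomial, sum_wt i1 i2 i3 a1 a2 a3 h12 h13 h23]

include h12 h13 h23 in
lemma phi_coeff (f : MvPolynomial σ K) (d : ℕ) :
    (phi i1 i2 i3 a1 a2 a3 f).coeff d = ∑ b ∈ f.support,
      if W i1 i2 i3 a1 a2 a3 b = d then monomial b (coeff b f) else 0 := by
  rw [phi_eq_sum i1 i2 i3 a1 a2 a3 h12 h13 h23, Polynomial.finset_sum_coeff]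
  apply Finset.sum_congr rfl
  intro b _
  rw [Polynomial.coeff_C_mul, Polynomial.coeff_X_pow]
  split <;> rename_i hsp
  · rw [if_pos hsp.symm, mul_one]
  · rw [if_neg (fun hc => hsp hc.symm), mul_zero]

include h12 h13 h23 in
lemma phi_coeff_coeff (f : MvPolynomial σ K) (b : σ →₀ ℕ) :
    coeff b ((phi i1 i2 i3 a1 a2 a3 f).coeff (W i1 i2 i3 a1 a2 a3 b)) = coeff b f := by
  classical
  rw [phi_coeff i1 i2 i3 a1 a2 a3 h12 h13 h23]
  by_cases hb : b ∈ f.support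
  · rw [show (coeff b (∑ b' ∈ f.support,
        if W i1 i2 i3 a1 a2 a3 b' = W i1 i2 i3 a1 a2 a3 b
        then monomial b' (coeff b' f) else 0)) = ∑ b' ∈ f.support,
        coeff b (if W i1 i2 i3 a1 a2 a3 b' = W i1 i2 i3 a1 a2 a3 b
        then monomial b' (coeff b' f) else 0) from MvPolynomial.coeff_sum _ _ _]
    rw [Finset.sum_eq_single b]
    · rw [if_pos rfl, MvPolynomial.coeff_monomial, if_pos rfl]
    · intro b' _ hne
      split
      · rw [MvPolynomial.coeff_monomial, if_neg hne]
      · exact MvPolynomial.coeff_zero _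
    · intro h; exact absurd hb h
  · rw [MvPolynomial.notMem_support_iff.mp hb]
    rw [show (coeff b (∑ b' ∈ f.support,
        if W i1 i2 i3 a1 a2 a3 b' = W i1 i2 i3 a1 a2 a3 b
        then monomial b' (coeff b' f) else 0)) = ∑ b' ∈ f.support,
        coeff b (if W i1 i2 i3 a1 a2 a3 b' = W i1 i2 i3 a1 a2 a3 b
        then monomial b' (coeff b' f) else 0) from MvPolynomial.coeff_sum _ _ _]
    apply Finset.sum_eq_zero
    intro b' hb'
    split
    · rw [MvPolynomial.coeff_monomial, if_neg (fun hc : b' = b => hb (hc ▸ hb'))]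
    · exact MvPolynomial.coeff_zero _

include h12 h13 h23 in
lemma phi_ne_zero {f : MvPolynomial σ K} (hf : f ≠ 0) :
    phi i1 i2 i3 a1 a2 a3 f ≠ 0 := by
  obtain ⟨b, hb⟩ := MvPolynomial.ne_zero_iff.mp hf
  intro hc
  apply hb
  rw [← phi_coeff_coeff i1 i2 i3 a1 a2 a3 h12 h13 h23 f b, hc]
  rw [Polynomial.coeff_zero, MvPolynomial.coeff_zero]

include h12 h13 h23 in
lemma TB_phi_iff (f : MvPolynomial σ K) (k : ℕ) :
    TB k (phi i1 i2 i3 a1 a2 a3 f) ↔ ∀ b ∈ f.support, k ≤ W i1 i2 i3 a1 a2 a3 b := by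
  constructor
  · intro h b hb
    by_contra hlt
    push_neg at hlt
    have := h _ hlt
    have h2 := phi_coeff_coeff i1 i2 i3 a1 a2 a3 h12 h13 h23 f b
    rw [this] at h2
    simp only [MvPolynomial.coeff_zero] at h2
    exact MvPolynomial.mem_support_iff.mp hb h2.symm
  · intro h d hd
    rw [phi_coeff i1 i2 i3 a1 a2 a3 h12 h13 h23]
    apply Finset.sum_eq_zero
    intro b hb
    rw [if_neg]
    intro hc
    have := h b hb
    omega

end Weights

end ColonAux

namespace ColonAux

open Polynomial

section Ideals

variable {K : Type*} [Field K] {σ : Type*}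
variable (i1 i2 i3 : σ) (a1 a2 a3 : ℕ)

/-- The ideal of polynomials all of whose monomials have weight at least `k`. -/
noncomputable def M (k : ℕ) : Ideal (MvPolynomial σ K) :=
  Ideal.comap (phi i1 i2 i3 a1 a2 a3 (K := K)) (TBideal (MvPolynomial σ K) k)

variable (h12 : i1 ≠ i2) (h13 : i1 ≠ i3) (h23 : i2 ≠ i3)

include h12 h13 h23 in
lemma mem_M_iff {f : MvPolynomial σ K} {k : ℕ} :
    f ∈ M i1 i2 i3 a1 a2 a3 k ↔ ∀ b ∈ f.support, k ≤ W i1 i2 i3 a1 a2 a3 b := by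
  rw [M, Ideal.mem_comap, mem_TBideal, TB_phi_iff i1 i2 i3 a1 a2 a3 h12 h13 h23]

lemma mul_mem_M {f g : MvPolynomial σ K} {j l : ℕ}
    (hf : f ∈ M i1 i2 i3 a1 a2 a3 j (K := K)) (hg : g ∈ M i1 i2 i3 a1 a2 a3 l) :
    f * g ∈ M i1 i2 i3 a1 a2 a3 (j + l) := by
  rw [M, Ideal.mem_comap, _root_.map_mul]
  exact TB_mul hf hg

include h12 h13 h23 in
lemma monomial_single_mem_M {j : σ} {a : ℕ} (hj : j = i1 ∧ a1 * (a2 * a3) ≤ a * (a2 * a3) ∨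
    j = i2 ∧ a1 * (a2 * a3) ≤ a * (a1 * a3) ∨ j = i3 ∧ a1 * (a2 * a3) ≤ a * (a1 * a2)) :
    (MvPolynomial.X j : MvPolynomial σ K) ^ a ∈ M i1 i2 i3 a1 a2 a3 (a1 * (a2 * a3)) := by
  classical
  rw [mem_M_iff i1 i2 i3 a1 a2 a3 h12 h13 h23]
  intro b hb
  rw [MvPolynomial.X_pow_eq_monomial, MvPolynomial.support_monomial] at hb
  rw [if_neg (one_ne_zero)] at hb
  rw [Finset.mem_singleton] at hb
  subst hb
  rcases hj with ⟨rfl, h⟩ | ⟨rfl, h⟩ | ⟨rfl, h⟩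
  · rw [W, Finsupp.single_eq_same, Finsupp.single_eq_of_ne' h12, Finsupp.single_eq_of_ne' h13]
    omega
  · rw [W, Finsupp.single_eq_same, Finsupp.single_eq_of_ne' (Ne.symm h12),
      Finsupp.single_eq_of_ne' h23]
    omega
  · rw [W, Finsupp.single_eq_same, Finsupp.single_eq_of_ne' (Ne.symm h13),
      Finsupp.single_eq_of_ne' (Ne.symm h23)]
    omega

include h12 h13 h23 in
lemma I_le_M {I : Ideal (MvPolynomial σ K)}
    (hI : I = Ideal.span {(MvPolynomial.X i1 : MvPolynomial σ K) ^ a1,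
      (MvPolynomial.X i2) ^ a2, (MvPolynomial.X i3) ^ a3}) :
    I ≤ M i1 i2 i3 a1 a2 a3 (a1 * (a2 * a3)) := by
  rw [hI, Ideal.span_le]
  rintro f (rfl | rfl | rfl)
  · exact monomial_single_mem_M i1 i2 i3 a1 a2 a3 h12 h13 h23 (Or.inl ⟨rfl, le_refl _⟩)
  · exact monomial_single_mem_M i1 i2 i3 a1 a2 a3 h12 h13 h23
      (Or.inr (Or.inl ⟨rfl, by ring_nf; omega⟩))
  · exact monomial_single_mem_M i1 i2 i3 a1 a2 a3 h12 h13 h23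
      (Or.inr (Or.inr ⟨rfl, by ring_nf; omega⟩))

include h12 h13 h23 in
lemma pow_I_le_M {I : Ideal (MvPolynomial σ K)}
    (hI : I = Ideal.span {(MvPolynomial.X i1 : MvPolynomial σ K) ^ a1,
      (MvPolynomial.X i2) ^ a2, (MvPolynomial.X i3) ^ a3}) (i : ℕ) :
    I ^ i ≤ M i1 i2 i3 a1 a2 a3 (i * (a1 * (a2 * a3))) := by
  induction i with
  | zero =>
    intro f _
    rw [mem_M_iff i1 i2 i3 a1 a2 a3 h12 h13 h23]
    intro b _
    omega
  | succ i ih =>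
    rw [pow_succ]
    apply Ideal.mul_le.mpr
    intro f hf g hg
    have := mul_mem_M i1 i2 i3 a1 a2 a3 (ih hf) (I_le_M i1 i2 i3 a1 a2 a3 h12 h13 h23 hI hg)
    rw [show i * (a1 * (a2 * a3)) + a1 * (a2 * a3) = (i+1) * (a1 * (a2 * a3)) by ring] at this
    exact this

include h12 h13 h23 in
lemma intClosure_le_M {I : Ideal (MvPolynomial σ K)}
    (hI : I = Ideal.span {(MvPolynomial.X i1 : MvPolynomial σ K) ^ a1,
      (MvPolynomial.X i2) ^ a2, (MvPolynomial.X i3) ^ a3}) :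
    intClosure I ≤ M i1 i2 i3 a1 a2 a3 (a1 * (a2 * a3)) := by
  rw [intClosure, Ideal.span_le]
  rintro x ⟨n, hn, c, hc, heq⟩
  by_cases hx : x = 0
  · subst hx; exact (M i1 i2 i3 a1 a2 a3 _).zero_mem
  rw [SetLike.mem_coe, M, Ideal.mem_comap, mem_TBideal]
  apply TB_of_integral_eq (phi_ne_zero i1 i2 i3 a1 a2 a3 h12 h13 h23 hx) hn
    (q := fun i => phi i1 i2 i3 a1 a2 a3 (c i))
  · intro i hi
    have := pow_I_le_M i1 i2 i3 a1 a2 a3 h12 h13 h23 hI i (hc i hi)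
    rw [M, Ideal.mem_comap, mem_TBideal] at this
    rwa [show i * (a1 * (a2 * a3)) = i * (a1 * (a2 * a3)) from rfl]
  · have := congrArg (phi i1 i2 i3 a1 a2 a3 (K := K)) heq
    rw [map_add, map_pow, map_sum, map_zero] at this
    simp only [_root_.map_mul, map_pow] at this
    exact this

lemma mem_intClosure_of_pow_mem {R : Type*} [CommRing R] {I : Ideal R} {x : R} {n : ℕ}
    (hn : 0 < n) (h : x ^ n ∈ I ^ n) : x ∈ intClosure I := by
  apply Ideal.subset_span
  refine ⟨n, hn, fun i => if i = n then -x ^ n else 0, ?_, ?_⟩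
  · intro i hi
    simp only
    split <;> rename_i hsp
    · subst hsp; exact neg_mem h
    · exact Ideal.zero_mem _
  · rw [Finset.sum_eq_single n]
    · simp
    · intro i _ hne
      simp only [if_neg hne, zero_mul]
    · intro hnn
      exact absurd (Finset.mem_Icc.mpr ⟨hn, le_refl n⟩) hnn

include h12 h13 h23 in
lemma mono_mem_intClosure {I : Ideal (MvPolynomial σ K)}
    (hI : I = Ideal.span {(MvPolynomial.X i1 : MvPolynomial σ K) ^ a1,
      (MvPolynomial.X i2) ^ a2, (MvPolynomial.X i3) ^ a3})
    (ha1 : 0 < a1) (ha2 : 0 < a2) (ha3 : 0 < a3)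
    (β1 β2 β3 : ℕ)
    (hW : a1 * (a2 * a3) ≤ β1 * (a2 * a3) + β2 * (a1 * a3) + β3 * (a1 * a2)) :
    (monomial (Finsupp.single i1 β1 + Finsupp.single i2 β2 + Finsupp.single i3 β3)
      (1 : K)) ∈ intClosure I := by
  have ha1' : 0 < a1 * (a2 * a3) := by positivity
  apply mem_intClosure_of_pow_mem (n := a1 * (a2 * a3)) ha1'
  have key : (monomial (Finsupp.single i1 β1 + Finsupp.single i2 β2 + Finsupp.single i3 β3)
      (1 : K)) ^ (a1 * (a2 * a3)) =
      ((MvPolynomial.X i1 ^ a1) ^ (β1 * (a2 * a3))) *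
      ((MvPolynomial.X i2 ^ a2) ^ (β2 * (a1 * a3))) *
      ((MvPolynomial.X i3 ^ a3) ^ (β3 * (a1 * a2))) := by
    rw [MvPolynomial.monomial_pow, one_pow]
    rw [MvPolynomial.X_pow_eq_monomial, MvPolynomial.X_pow_eq_monomial,
      MvPolynomial.X_pow_eq_monomial, MvPolynomial.monomial_pow, MvPolynomial.monomial_pow,
      MvPolynomial.monomial_pow, one_pow, MvPolynomial.monomial_mul, MvPolynomial.monomial_mul,
      one_mul]
    congr 1
    rw [smul_add, smul_add]
    simp only [Finsupp.smul_single, smul_eq_mul]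
    rw [show a1 * (a2 * a3) * β1 = β1 * (a2 * a3) * a1 by ring,
      show a1 * (a2 * a3) * β2 = β2 * (a1 * a3) * a2 by ring,
      show a1 * (a2 * a3) * β3 = β3 * (a1 * a2) * a3 by ring]
    simp
  rw [key]
  have h1 : (MvPolynomial.X i1 : MvPolynomial σ K) ^ a1 ∈ I := by
    rw [hI]; exact Ideal.subset_span (Set.mem_insert _ _)
  have h2 : (MvPolynomial.X i2 : MvPolynomial σ K) ^ a2 ∈ I := by
    rw [hI]; exact Ideal.subset_span (Set.mem_insert_of_mem _ (Set.mem_insert _ _))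
  have h3 : (MvPolynomial.X i3 : MvPolynomial σ K) ^ a3 ∈ I := by
    rw [hI]
    exact Ideal.subset_span (Set.mem_insert_of_mem _ (Set.mem_insert_of_mem _ rfl))
  have : ((MvPolynomial.X i1 ^ a1) ^ (β1 * (a2 * a3))) *
      ((MvPolynomial.X i2 ^ a2) ^ (β2 * (a1 * a3))) *
      ((MvPolynomial.X i3 ^ a3) ^ (β3 * (a1 * a2))) ∈
      I ^ (β1 * (a2 * a3) + β2 * (a1 * a3) + β3 * (a1 * a2)) := by
    rw [pow_add, pow_add]
    exact Ideal.mul_mem_mul (Ideal.mul_mem_mul (Ideal.pow_mem_pow h1 _)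
      (Ideal.pow_mem_pow h2 _)) (Ideal.pow_mem_pow h3 _)
  exact Ideal.pow_le_pow_right (by omega) this

end Ideals

end ColonAux

namespace ColonAux

set_option maxHeartbeats 2000000 in
lemma exp_facts (a1 a2 a3 m : ℕ) (ha1 : 1 ≤ a1) (h12' : a1 ≤ a2) (h23' : a2 ≤ a3)
    (hm1 : 1 ≤ m) (hm2 : m ≤ a1) :
    (a1 - m) * (a2 * a3) + expTwo a1 a2 m * (a1 * a3) + expThree a1 a2 a3 m * (a1 * a2)
        < a1 * (a2 * a3) ∧
    a1 * (a2 * a3) ≤ ((a1 - m) + 1) * (a2 * a3) + expTwo a1 a2 m * (a1 * a3)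
        + expThree a1 a2 a3 m * (a1 * a2) ∧
    a1 * (a2 * a3) ≤ (a1 - m) * (a2 * a3) + (expTwo a1 a2 m + 1) * (a1 * a3)
        + expThree a1 a2 a3 m * (a1 * a2) ∧
    a1 * (a2 * a3) ≤ (a1 - m) * (a2 * a3) + expTwo a1 a2 m * (a1 * a3)
        + (expThree a1 a2 a3 m + 1) * (a1 * a2) := by
  have hq1 : (0:ℚ) < a1 := by exact_mod_cast ha1
  have hq2 : (0:ℚ) < a2 := by exact_mod_cast lt_of_lt_of_le ha1 h12'
  have hq3 : (0:ℚ) < a3 := by exact_mod_cast lt_of_lt_of_le (lt_of_lt_of_le ha1 h12') h23'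
  have hqm : (1:ℚ) ≤ m := by exact_mod_cast hm1
  have hq12 : (a1:ℚ) ≤ a2 := by exact_mod_cast h12'
  set t : ℚ := ((m : ℚ) * a2) / a1 with ht
  set c : ℤ := ⌈t⌉ with hc
  set y : ℚ := ((a3 : ℚ) / a2) * (t - c + 1) with hy
  set u : ℤ := ⌈y⌉ with hu
  have ht_pos : 0 < t := div_pos (mul_pos (by linarith) hq2) hq1
  have hc1 : 1 ≤ c := Int.ceil_pos.mpr ht_pos
  have hcl : (c:ℚ) < t + 1 := Int.ceil_lt_add_one t
  have hcu : t ≤ (c:ℚ) := Int.le_ceil t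
  have hs_pos : 0 < t - c + 1 := by linarith
  have hs_le : t - c + 1 ≤ 1 := by linarith
  have hy_pos : 0 < y := mul_pos (div_pos hq3 hq2) hs_pos
  have hu1 : 1 ≤ u := Int.ceil_pos.mpr hy_pos
  have hul : (u:ℚ) < y + 1 := Int.ceil_lt_add_one y
  have huu : y ≤ (u:ℚ) := Int.le_ceil y
  have htm : t * a1 = m * a2 := div_mul_cancel₀ _ (ne_of_gt hq1)
  have hy2 : y * a2 = a3 * (t - c + 1) := by
    rw [hy]; field_simp
  have hcq : (1:ℚ) ≤ (c:ℚ) := by exact_mod_cast hc1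
  have huq : (1:ℚ) ≤ (u:ℚ) := by exact_mod_cast hu1
  have hE1 : ((a1 - m : ℕ) : ℚ) = (a1:ℚ) - m := by
    rw [Nat.cast_sub hm2]
  have hE2 : ((expTwo a1 a2 m : ℕ) : ℚ) = (c:ℚ) - 1 := by
    rw [expTwo, ← ht, ← hc]
    rw [show ((((c - 1).toNat : ℕ)) : ℚ) = (((c - 1).toNat : ℤ) : ℚ) by push_cast; ring]
    rw [Int.toNat_of_nonneg (by omega)]
    push_cast; ring
  have hE3 : ((expThree a1 a2 a3 m : ℕ) : ℚ) = (u:ℚ) - 1 := by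
    rw [expThree, ← ht, ← hc, ← hy, ← hu]
    rw [show ((((u - 1).toNat : ℕ)) : ℚ) = (((u - 1).toNat : ℤ) : ℚ) by push_cast; ring]
    rw [Int.toNat_of_nonneg (by omega)]
    push_cast; ring
  have htm3 : t * ((a1:ℚ) * a3) = m * ((a2:ℚ) * a3) := by linear_combination (a3:ℚ) * htm
  have hy3 : y * ((a1:ℚ) * a2) = (a1:ℚ) * ((a3:ℚ) * (t - c + 1)) := by
    linear_combination (a1:ℚ) * hy2
  have kc : t * ((a1:ℚ) * a3) ≤ (c:ℚ) * ((a1:ℚ) * a3) :=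
    mul_le_mul_of_nonneg_right hcu (by positivity)
  have ku : y * ((a1:ℚ) * a2) ≤ (u:ℚ) * ((a1:ℚ) * a2) :=
    mul_le_mul_of_nonneg_right huu (by positivity)
  have ku' : ((u:ℚ) - 1) * ((a1:ℚ) * a2) < y * ((a1:ℚ) * a2) :=
    mul_lt_mul_of_pos_right (by linarith) (by positivity)
  have k0 : (0:ℚ) ≤ ((u:ℚ) - 1) * ((a1:ℚ) * a2) :=
    mul_nonneg (by linarith) (by positivity)
  have k12 : (a1:ℚ) * a3 ≤ (a2:ℚ) * a3 := mul_le_mul_of_nonneg_right hq12 (le_of_lt hq3)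
  refine ⟨?_, ?_, ?_, ?_⟩
  · rw [← Nat.cast_lt (α := ℚ)]
    push_cast [hE1, hE2, hE3]
    nlinarith [ku', hy3, htm3]
  · rw [← Nat.cast_le (α := ℚ)]
    push_cast [hE1, hE2, hE3]
    nlinarith [kc, htm3, k0, k12]
  · rw [← Nat.cast_le (α := ℚ)]
    push_cast [hE1, hE2, hE3]
    nlinarith [kc, htm3, k0]
  · rw [← Nat.cast_le (α := ℚ)]
    push_cast [hE1, hE2, hE3]
    nlinarith [ku, hy3, htm3]

end ColonAux

/-- For `I = ⟨x_{i_1}^{a_1}, x_{i_2}^{a_2}, x_{i_3}^{a_3}⟩` with `1 ≤ a_1 ≤ a_2 ≤ a_3` and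
`P = ⟨x_{i_1}, x_{i_2}, x_{i_3}⟩`, one has `(closure(I) : f_m) = P` for `1 ≤ m ≤ a_1`. -/
theorem colon_intClosure_fm_eq
    {K : Type*} [Field K] {σ : Type*} (i1 i2 i3 : σ)
    (h12 : i1 ≠ i2) (h13 : i1 ≠ i3) (h23 : i2 ≠ i3)
    (a1 a2 a3 : ℕ) (ha1 : 1 ≤ a1) (h12' : a1 ≤ a2) (h23' : a2 ≤ a3)
    (I : Ideal (MvPolynomial σ K))
    (hI : I = Ideal.span {(X i1 : MvPolynomial σ K) ^ a1, (X i2) ^ a2, (X i3) ^ a3})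
    (P : Ideal (MvPolynomial σ K))
    (hP : P = Ideal.span {(X i1 : MvPolynomial σ K), X i2, X i3})
    (m : ℕ) (hm1 : 1 ≤ m) (hm2 : m ≤ a1) :
    Submodule.colon (intClosure I)
      (Ideal.span {(monomial (fExp i1 i2 i3 a1 a2 a3 m) 1 : MvPolynomial σ K)}) = P := by
  classical
  have ha2 : 1 ≤ a2 := le_trans ha1 h12'
  have ha3 : 1 ≤ a3 := le_trans ha2 h23'
  obtain ⟨hA, hB1, hB2, hB3⟩ := ColonAux.exp_facts a1 a2 a3 m ha1 h12' h23' hm1 hm2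
  have hfe : fExp i1 i2 i3 a1 a2 a3 m = Finsupp.single i1 (a1 - m)
      + Finsupp.single i2 (expTwo a1 a2 m)
      + Finsupp.single i3 (expThree a1 a2 a3 m) := rfl
  apply le_antisymm
  · intro r hr
    rw [Ideal.mem_colon_span_singleton] at hr
    have hrM := ColonAux.intClosure_le_M i1 i2 i3 a1 a2 a3 h12 h13 h23 hI hr
    rw [ColonAux.mem_M_iff i1 i2 i3 a1 a2 a3 h12 h13 h23] at hrM
    have himg : ({(X i1 : MvPolynomial σ K), X i2, X i3} : Set _)
        = X '' {i1, i2, i3} := by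
      rw [Set.image_insert_eq, Set.image_insert_eq, Set.image_singleton]
    rw [hP, himg, mem_ideal_span_X_image]
    intro b hb
    by_contra hcon
    push_neg at hcon
    have hb1 : b i1 = 0 := hcon i1 (by simp)
    have hb2 : b i2 = 0 := hcon i2 (by simp)
    have hb3 : b i3 = 0 := hcon i3 (by simp)
    have hmem : b + fExp i1 i2 i3 a1 a2 a3 m ∈
        (r * monomial (fExp i1 i2 i3 a1 a2 a3 m) 1).support := by
      rw [MvPolynomial.mem_support_iff, MvPolynomial.coeff_mul_monomial, mul_one]
      exact MvPolynomial.mem_support_iff.mp hb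
    have hge := hrM _ hmem
    rw [ColonAux.W_add] at hge
    have hWb : ColonAux.W i1 i2 i3 a1 a2 a3 b = 0 := by
      rw [ColonAux.W, hb1, hb2, hb3]; ring
    have hWfe : ColonAux.W i1 i2 i3 a1 a2 a3 (fExp i1 i2 i3 a1 a2 a3 m) =
        (a1 - m) * (a2 * a3) + expTwo a1 a2 m * (a1 * a3)
          + expThree a1 a2 a3 m * (a1 * a2) := by
      rw [ColonAux.W, hfe]
      rw [Finsupp.add_apply, Finsupp.add_apply, Finsupp.add_apply, Finsupp.add_apply,
        Finsupp.add_apply, Finsupp.add_apply, Finsupp.single_eq_same, Finsupp.single_eq_same,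
        Finsupp.single_eq_same, Finsupp.single_eq_of_ne' (Ne.symm h12),
        Finsupp.single_eq_of_ne' (Ne.symm h13), Finsupp.single_eq_of_ne' h12,
        Finsupp.single_eq_of_ne' (Ne.symm h23), Finsupp.single_eq_of_ne' h13,
        Finsupp.single_eq_of_ne' h23]
      ring
    omega
  · rw [hP, Ideal.span_le]
    have hmono : ∀ β1 β2 β3 : ℕ,
        a1 * (a2 * a3) ≤ β1 * (a2 * a3) + β2 * (a1 * a3) + β3 * (a1 * a2) →
        (monomial (Finsupp.single i1 β1 + Finsupp.single i2 β2 + Finsupp.single i3 β3)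
          (1 : K)) ∈ intClosure I := fun β1 β2 β3 h =>
      ColonAux.mono_mem_intClosure i1 i2 i3 a1 a2 a3 h12 h13 h23 hI
        (by omega) (by omega) (by omega) β1 β2 β3 h
    rintro f hf
    simp only [Set.mem_insert_iff, Set.mem_singleton_iff] at hf
    have hX : ∀ j : σ, (X j : MvPolynomial σ K) = monomial (Finsupp.single j 1) 1 := by
      intro j
      rw [← MvPolynomial.X_pow_eq_monomial, pow_one]
    rcases hf with rfl | rfl | rfl <;> rw [SetLike.mem_coe, Ideal.mem_colon_span_singleton]
    · rw [hX, monomial_mul, one_mul]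
      have hexp : Finsupp.single i1 1 + fExp i1 i2 i3 a1 a2 a3 m =
          Finsupp.single i1 ((a1 - m) + 1) + Finsupp.single i2 (expTwo a1 a2 m)
            + Finsupp.single i3 (expThree a1 a2 a3 m) := by
        rw [hfe, Finsupp.single_add]; abel
      rw [hexp]
      exact hmono _ _ _ hB1
    · rw [hX, monomial_mul, one_mul]
      have hexp : Finsupp.single i2 1 + fExp i1 i2 i3 a1 a2 a3 m =
          Finsupp.single i1 (a1 - m) + Finsupp.single i2 (expTwo a1 a2 m + 1)
            + Finsupp.single i3 (expThree a1 a2 a3 m) := by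
        rw [hfe, Finsupp.single_add]; abel
      rw [hexp]
      exact hmono _ _ _ hB2
    · rw [hX, monomial_mul, one_mul]
      have hexp : Finsupp.single i3 1 + fExp i1 i2 i3 a1 a2 a3 m =
          Finsupp.single i1 (a1 - m) + Finsupp.single i2 (expTwo a1 a2 m)
            + Finsupp.single i3 (expThree a1 a2 a3 m + 1) := by
        rw [hfe, Finsupp.single_add]; abel
      rw [hexp]
      exact hmono _ _ _ hB3
end

section
/- Let I = ⟨x_{i_1}, x_{i_2}^{a_2}, x_{i_3}^{a_3}⟩ with 1 ≤ a_2 ≤ a_3 (so a_1 = 1). Then for all n ≥ 1, v(\overline{I^n}) = n + a_2 + ⌈a_3/a_2⌉ − 3. -/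
open MvPolynomial Ideal

set_option linter.unusedSectionVars false

namespace VNumAux

variable {K : Type*} [Field K] {σ : Type*}


variable {K : Type*} [Field K] {σ : Type*}

/-- weight of an exponent vector -/
def wf (i1 i2 i3 : σ) (a2 a3 : ℕ) (d : σ →₀ ℕ) : ℕ :=
  a2 * a3 * d i1 + a3 * d i2 + a2 * d i3

lemma wf_add (i1 i2 i3 : σ) (a2 a3 : ℕ) (d e : σ →₀ ℕ) :
    wf i1 i2 i3 a2 a3 (d + e) = wf i1 i2 i3 a2 a3 d + wf i1 i2 i3 a2 a3 e := by
  simp only [wf, Finsupp.add_apply]; ring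

lemma wf_zero (i1 i2 i3 : σ) (a2 a3 : ℕ) : wf i1 i2 i3 a2 a3 0 = 0 := by
  simp [wf]

/-- the ideal of polynomials all of whose monomials have weight at least `t` -/
def wIdeal (i1 i2 i3 : σ) (a2 a3 : ℕ) (K : Type*) [Field K] (t : ℕ) :
    Ideal (MvPolynomial σ K) where
  carrier := {f | ∀ d ∈ f.support, t ≤ wf i1 i2 i3 a2 a3 d}
  add_mem' := by
    classical
    intro f g hf hg d hd
    rcases Finset.mem_union.1 (Finsupp.support_add hd) with h | h
    · exact hf d h
    · exact hg d h
  zero_mem' := by intro d hd; simp at hd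
  smul_mem' := by
    classical
    intro r f hf d hd
    rw [smul_eq_mul] at hd
    rcases Finset.mem_add.1 (support_mul r f hd) with ⟨a, ha, b, hb, rfl⟩
    rw [wf_add]
    exact le_add_self.trans (Nat.add_le_add_left (hf b hb) _)

lemma mem_wIdeal {i1 i2 i3 : σ} {a2 a3 t : ℕ} {f : MvPolynomial σ K} :
    f ∈ wIdeal i1 i2 i3 a2 a3 K t ↔ ∀ d ∈ f.support, t ≤ wf i1 i2 i3 a2 a3 d := Iff.rfl

lemma wIdeal_mono {i1 i2 i3 : σ} {a2 a3 : ℕ} {t t' : ℕ} (h : t ≤ t') :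
    wIdeal i1 i2 i3 a2 a3 K t' ≤ wIdeal i1 i2 i3 a2 a3 K t :=
  fun _ hf d hd => h.trans (hf d hd)

lemma mul_mem_wIdeal {i1 i2 i3 : σ} {a2 a3 : ℕ} {s t : ℕ} {f g : MvPolynomial σ K}
    (hf : f ∈ wIdeal i1 i2 i3 a2 a3 K s) (hg : g ∈ wIdeal i1 i2 i3 a2 a3 K t) :
    f * g ∈ wIdeal i1 i2 i3 a2 a3 K (s + t) := by
  classical
  intro d hd
  rcases Finset.mem_add.1 (support_mul f g hd) with ⟨a, ha, b, hb, rfl⟩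
  rw [wf_add]
  exact Nat.add_le_add (hf a ha) (hg b hb)

lemma pow_mem_wIdeal {i1 i2 i3 : σ} {a2 a3 : ℕ} {s : ℕ} {f : MvPolynomial σ K}
    (hf : f ∈ wIdeal i1 i2 i3 a2 a3 K s) (m : ℕ) :
    f ^ m ∈ wIdeal i1 i2 i3 a2 a3 K (m * s) := by
  induction m with
  | zero => intro d hd; omega
  | succ k ih =>
      have := mul_mem_wIdeal ih hf
      rw [pow_succ]
      convert this using 2
      ring

lemma ideal_pow_le_wIdeal {i1 i2 i3 : σ} {a2 a3 : ℕ} {s : ℕ} {J : Ideal (MvPolynomial σ K)}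
    (hJ : J ≤ wIdeal i1 i2 i3 a2 a3 K s) (m : ℕ) :
    J ^ m ≤ wIdeal i1 i2 i3 a2 a3 K (m * s) := by
  induction m with
  | zero => intro f hf d hd; omega
  | succ k ih =>
      rw [pow_succ]
      refine Ideal.mul_le.2 fun r hr t ht => ?_
      have := mul_mem_wIdeal (ih hr) (hJ ht)
      convert this using 2
      ring


section
variable [DecidableEq σ]
/-- weight of a single variable -/
def wt (i1 i2 i3 : σ) (a2 a3 : ℕ) (j : σ) : ℕ :=
  if j = i1 then a2 * a3 else if j = i2 then a3 else if j = i3 then a2 else 0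

lemma wf_single (i1 i2 i3 : σ) (h12 : i1 ≠ i2) (h13 : i1 ≠ i3) (h23 : i2 ≠ i3)
    (a2 a3 : ℕ) (j : σ) (m : ℕ) :
    wf i1 i2 i3 a2 a3 (Finsupp.single j m) = wt i1 i2 i3 a2 a3 j * m := by
  simp only [wf, wt, Finsupp.single_apply]
  split_ifs <;> subst_vars <;> first | ring1 | (exact absurd rfl h12) | (exact absurd rfl h13) | (exact absurd rfl h23)


variable {K : Type*} [Field K] {σ : Type*} [DecidableEq σ]

lemma wf_eq_sum (i1 i2 i3 : σ) (h12 : i1 ≠ i2) (h13 : i1 ≠ i3) (h23 : i2 ≠ i3)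
    (a2 a3 : ℕ) (d : σ →₀ ℕ) :
    wf i1 i2 i3 a2 a3 d = d.sum (fun j m => wt i1 i2 i3 a2 a3 j * m) := by
  induction d using Finsupp.induction with
  | zero => simp [wf]
  | single_add j m d hj hm ih =>
      rw [wf_add, Finsupp.sum_add_index (by simp) (by intros; ring), ih,
        Finsupp.sum_single_index (by simp), wf_single i1 i2 i3 h12 h13 h23]

/-- the homogenization map recording weights in a polynomial variable -/
noncomputable def Phi (i1 i2 i3 : σ) (a2 a3 : ℕ) :
    MvPolynomial σ K →+* Polynomial (MvPolynomial σ K) :=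
  eval₂Hom (Polynomial.C.comp MvPolynomial.C)
    (fun j => Polynomial.C (X j) * Polynomial.X ^ (wt i1 i2 i3 a2 a3 j))

lemma Phi_monomial (i1 i2 i3 : σ) (h12 : i1 ≠ i2) (h13 : i1 ≠ i3) (h23 : i2 ≠ i3)
    (a2 a3 : ℕ) (d : σ →₀ ℕ) (c : K) :
    Phi i1 i2 i3 a2 a3 (monomial d c)
      = Polynomial.C (monomial d c) * Polynomial.X ^ (wf i1 i2 i3 a2 a3 d) := by
  rw [Phi, eval₂Hom_monomial]
  have h1 : (d.prod fun j m => (Polynomial.C (X j (R := K)) * Polynomial.X ^ (wt i1 i2 i3 a2 a3 j)) ^ m)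
      = (d.prod fun j m => Polynomial.C ((X j (R := K)) ^ m)) *
        (d.prod fun j m => Polynomial.X ^ (wt i1 i2 i3 a2 a3 j * m)) := by
    rw [Finsupp.prod, Finsupp.prod, Finsupp.prod, ← Finset.prod_mul_distrib]
    exact Finset.prod_congr rfl fun j _ => by rw [mul_pow, ← map_pow, pow_mul]
  rw [h1]
  have h2 : (d.prod fun j m => Polynomial.C ((X j (R := K)) ^ m))
      = Polynomial.C (monomial d (1 : K)) := by
    rw [Finsupp.prod, ← map_prod, prod_X_pow_eq_monomial]
  have h3 : (d.prod fun j m => (Polynomial.X (R := MvPolynomial σ K)) ^ (wt i1 i2 i3 a2 a3 j * m))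
      = Polynomial.X ^ (wf i1 i2 i3 a2 a3 d) := by
    rw [Finsupp.prod, Finset.prod_pow_eq_pow_sum, wf_eq_sum i1 i2 i3 h12 h13 h23,
      Finsupp.sum]
  rw [h2, h3, RingHom.comp_apply, ← mul_assoc, ← Polynomial.C_mul, MvPolynomial.C_mul_monomial, mul_one]


lemma coeff_Phi (i1 i2 i3 : σ) (h12 : i1 ≠ i2) (h13 : i1 ≠ i3) (h23 : i2 ≠ i3)
    (a2 a3 : ℕ) (f : MvPolynomial σ K) (k : ℕ) :
    (Phi i1 i2 i3 a2 a3 f).coeff k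
      = ∑ d ∈ f.support, if wf i1 i2 i3 a2 a3 d = k then monomial d (coeff d f) else 0 := by
  conv_lhs => rw [← support_sum_monomial_coeff f, map_sum, Polynomial.finset_sum_coeff]
  refine Finset.sum_congr rfl fun d _ => ?_
  rw [Phi_monomial i1 i2 i3 h12 h13 h23, Polynomial.coeff_C_mul, Polynomial.coeff_X_pow,
    mul_ite, mul_one, mul_zero]
  exact if_congr eq_comm rfl rfl

lemma coeff_coeff_Phi (i1 i2 i3 : σ) (h12 : i1 ≠ i2) (h13 : i1 ≠ i3) (h23 : i2 ≠ i3)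
    (a2 a3 : ℕ) (f : MvPolynomial σ K) (d0 : σ →₀ ℕ) :
    MvPolynomial.coeff d0 ((Phi i1 i2 i3 a2 a3 f).coeff (wf i1 i2 i3 a2 a3 d0))
      = coeff d0 f := by
  rw [coeff_Phi i1 i2 i3 h12 h13 h23, coeff_sum]
  have h : ∀ d ∈ f.support,
      coeff d0 (if wf i1 i2 i3 a2 a3 d = wf i1 i2 i3 a2 a3 d0
        then monomial d (coeff d f) else 0) = if d = d0 then coeff d0 f else 0 := by
    intro d _
    by_cases h2 : d = d0
    · subst h2; rw [if_pos rfl, if_pos rfl, coeff_monomial, if_pos rfl]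
    · rw [if_neg h2]
      split_ifs with h1
      · rw [coeff_monomial, if_neg h2]
      · rw [coeff_zero]
  rw [Finset.sum_congr rfl h, Finset.sum_ite_eq' f.support d0 (fun _ => coeff d0 f)]
  split_ifs with h0
  · rfl
  · exact (notMem_support_iff.1 h0).symm

lemma Phi_ne_zero (i1 i2 i3 : σ) (h12 : i1 ≠ i2) (h13 : i1 ≠ i3) (h23 : i2 ≠ i3)
    (a2 a3 : ℕ) {f : MvPolynomial σ K} (hf : f ≠ 0) :
    Phi i1 i2 i3 a2 a3 f ≠ 0 := by
  obtain ⟨d0, hd0⟩ := Finset.nonempty_iff_ne_empty.2 (mt support_eq_empty.1 hf)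
  intro h
  apply mem_support_iff.1 hd0
  rw [← coeff_coeff_Phi i1 i2 i3 h12 h13 h23 a2 a3 f d0, h, Polynomial.coeff_zero, coeff_zero]

lemma mem_wIdeal_iff_le_ntd (i1 i2 i3 : σ) (h12 : i1 ≠ i2) (h13 : i1 ≠ i3) (h23 : i2 ≠ i3)
    (a2 a3 : ℕ) {f : MvPolynomial σ K} (hf : f ≠ 0) (t : ℕ) :
    f ∈ wIdeal i1 i2 i3 a2 a3 K t ↔ t ≤ (Phi i1 i2 i3 a2 a3 f).natTrailingDegree := by
  constructor
  · intro h
    refine Polynomial.le_natTrailingDegree (Phi_ne_zero i1 i2 i3 h12 h13 h23 a2 a3 hf) ?_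
    intro m hm
    rw [coeff_Phi i1 i2 i3 h12 h13 h23]
    refine Finset.sum_eq_zero fun d hd => if_neg fun e => ?_
    have := h d hd
    omega
  · intro h d hd
    by_contra hlt
    push_neg at hlt
    have hne : (Phi i1 i2 i3 a2 a3 f).coeff (wf i1 i2 i3 a2 a3 d) ≠ 0 := by
      intro h0
      apply mem_support_iff.1 hd
      rw [← coeff_coeff_Phi i1 i2 i3 h12 h13 h23 a2 a3 f d, h0, coeff_zero]
    have := Polynomial.natTrailingDegree_le_of_ne_zero hne
    omega

lemma ntd_Phi_monomial (i1 i2 i3 : σ) (h12 : i1 ≠ i2) (h13 : i1 ≠ i3) (h23 : i2 ≠ i3)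
    (a2 a3 : ℕ) (d : σ →₀ ℕ) {c : K} (hc : c ≠ 0) :
    (Phi i1 i2 i3 a2 a3 (monomial d c)).natTrailingDegree = wf i1 i2 i3 a2 a3 d := by
  rw [Phi_monomial i1 i2 i3 h12 h13 h23,
    Polynomial.natTrailingDegree_mul_X_pow (by simpa using hc),
    Polynomial.natTrailingDegree_C, zero_add]

lemma exists_split (A B C T : ℕ) (h : T ≤ A + B + C) :
    ∃ s1 s2 s3 : ℕ, s1 + s2 + s3 = T ∧ s1 ≤ A ∧ s2 ≤ B ∧ s3 ≤ C :=
  ⟨min A T, min B (T - min A T), T - min A T - min B (T - min A T), by omega⟩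

lemma arith_lower (n a2 a3 c b1 b2 b3 : ℤ) (hn : 1 ≤ n) (ha2 : 1 ≤ a2) (ha23 : a2 ≤ a3)
    (hc1 : a3 ≤ a2 * c) (hc2 : a2 * c < a3 + a2) (hb1 : 0 ≤ b1) (hb2 : 0 ≤ b2) (hb3 : 0 ≤ b3)
    (hw1 : n * (a2 * a3) ≤ a2 * a3 * b1 + a3 * b2 + a2 * b3 + a2)
    (hw2 : a2 * a3 * b1 + a3 * b2 + a2 * b3 < n * (a2 * a3)) :
    n + a2 + c - 3 ≤ b1 + b2 + b3 := by
  have ha3 : 1 ≤ a3 := ha2.trans ha23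
  have ha2p : (0:ℤ) < a2 := by omega
  have ha3p : (0:ℤ) < a3 := by omega
  have hn1 : (0:ℤ) ≤ a3 * b2 := mul_nonneg (by omega) hb2
  have hn2 : (0:ℤ) ≤ a2 * b3 := mul_nonneg (by omega) hb3
  have hb1n : b1 ≤ n - 1 := by
    have h1 : a2 * a3 * b1 < a2 * a3 * n := by linarith [hw2]
    have := lt_of_mul_lt_mul_left h1 (by positivity)
    omega
  set m : ℤ := n - b1 with hm
  have hm1 : 1 ≤ m := by omega
  have e1 : a2 * a3 * b1 = a2 * a3 * n - a2 * a3 * m := by rw [hm]; ring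
  have e2 : a2 * a3 * m = a3 * (m * a2) := by ring
  have hb2' : b2 ≤ m * a2 - 1 := by
    have h1 : a3 * b2 < a3 * (m * a2) := by linarith
    have := lt_of_mul_lt_mul_left h1 (by positivity)
    omega
  set s : ℤ := m * a2 - b2 with hs
  have hs1 : 1 ≤ s := by omega
  have e3 : a3 * s = a3 * (m * a2) - a3 * b2 := by rw [hs]; ring
  have hkey : a3 * s ≤ a2 * b3 + a2 := by linarith
  have hb3' : s + c - 2 ≤ b3 := by
    have h6 : a2 * (s - 1) ≤ a3 * (s - 1) :=
      mul_le_mul_of_nonneg_right ha23 (by omega)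
    have e4 : a2 * (s + c - 2) = a2 * (s - 1) + a2 * c - a2 := by ring
    have e5 : a3 * (s - 1) = a3 * s - a3 := by ring
    have h7 : a2 * (s + c - 2) < a2 * (b3 + 1) := by
      have : a2 * (b3 + 1) = a2 * b3 + a2 := by ring
      linarith
    have := lt_of_mul_lt_mul_left h7 (by positivity)
    omega
  have e6 : (m - 1) * (a2 - 1) = m * a2 - m - a2 + 1 := by ring
  have h8 : (0:ℤ) ≤ (m - 1) * (a2 - 1) := mul_nonneg (by omega) (by omega)
  omega

lemma arith_wfb_low (n a2 a3 c : ℤ) (hn : 1 ≤ n) (ha2 : 1 ≤ a2) (ha23 : a2 ≤ a3)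
    (hc1 : a3 ≤ a2 * c) :
    n * (a2 * a3) ≤ a2 * a3 * (n - 1) + a3 * (a2 - 1) + a2 * (c - 1) + a2 := by
  nlinarith

lemma arith_wfb_high (n a2 a3 c : ℤ) (hn : 1 ≤ n) (ha2 : 1 ≤ a2) (ha3 : 1 ≤ a3)
    (hc2 : a2 * c < a3 + a2) :
    a2 * a3 * (n - 1) + a3 * (a2 - 1) + a2 * (c - 1) < n * (a2 * a3) := by
  nlinarith

lemma ntd_pow {R : Type*} [CommRing R] [IsDomain R] {p : Polynomial R} (hp : p ≠ 0) (k : ℕ) :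
    (p ^ k).natTrailingDegree = k * p.natTrailingDegree := by
  induction k with
  | zero => simp
  | succ m ih =>
      rw [pow_succ, Polynomial.natTrailingDegree_mul (pow_ne_zero m hp) hp, ih]
      ring

lemma monomial_mem_wIdeal {i1 i2 i3 : σ} {a2 a3 t : ℕ} {d : σ →₀ ℕ} {c : K}
    (h : t ≤ wf i1 i2 i3 a2 a3 d) :
    monomial d c ∈ wIdeal i1 i2 i3 a2 a3 K t := by
  intro e he
  have := support_monomial_subset he
  rw [Finset.mem_singleton] at this
  subst this
  exact h

lemma degree_single' (j : σ) (m : ℕ) : (Finsupp.single j m).degree = m := by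
  classical
  by_cases hm : m = 0
  · simp [hm]
  · rw [Finsupp.degree_single]

lemma degree_add' (u v : σ →₀ ℕ) : (u + v).degree = u.degree + v.degree := by
  simp only [Finsupp.degree_eq_weight_one, map_add]

lemma sum_three_le_degree (i1 i2 i3 : σ) (h12 : i1 ≠ i2) (h13 : i1 ≠ i3) (h23 : i2 ≠ i3)
    (d : σ →₀ ℕ) : d i1 + d i2 + d i3 ≤ d.degree := by
  classical
  have h1 : ({i1, i2, i3} : Finset σ).sum d = d i1 + d i2 + d i3 := by
    rw [Finset.sum_insert (by simp [h12, h13]), Finset.sum_insert (by simp [h23]),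
      Finset.sum_singleton]
    ring
  have h2 : (({i1, i2, i3} : Finset σ).filter (fun j => d j ≠ 0)).sum d
      = ({i1, i2, i3} : Finset σ).sum d := by
    apply Finset.sum_filter_of_ne
    intro j _ hj
    exact hj
  have h3 : (({i1, i2, i3} : Finset σ).filter (fun j => d j ≠ 0)) ⊆ d.support := by
    intro j hj
    rw [Finset.mem_filter] at hj
    exact Finsupp.mem_support_iff.2 hj.2
  calc d i1 + d i2 + d i3 = (({i1, i2, i3} : Finset σ).filter (fun j => d j ≠ 0)).sum d := by
        rw [h2, h1]
    _ ≤ d.support.sum d := Finset.sum_le_sum_of_subset h3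
    _ = d.degree := rfl

lemma single3_sub_add (i1 i2 i3 : σ) (h12 : i1 ≠ i2) (h13 : i1 ≠ i3) (h23 : i2 ≠ i3) (e : σ →₀ ℕ) (s1 s2 s3 : ℕ)
    (hv1 : s1 ≤ e i1) (hv2 : s2 ≤ e i2) (hv3 : s3 ≤ e i3) :
    (e - (Finsupp.single i1 s1 + Finsupp.single i2 s2 + Finsupp.single i3 s3))
      + (Finsupp.single i1 s1 + Finsupp.single i2 s2 + Finsupp.single i3 s3) = e := by
  ext j
  simp only [Finsupp.add_apply, Finsupp.tsub_apply, Finsupp.single_apply]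
  split_ifs <;> subst_vars <;> first | omega | simp_all

lemma monomial_mem_intClosure (i1 i2 i3 : σ) (h12 : i1 ≠ i2) (h13 : i1 ≠ i3) (h23 : i2 ≠ i3)
    (a2 a3 : ℕ) (ha2 : 1 ≤ a2) (ha3 : 1 ≤ a3)
    (I : Ideal (MvPolynomial σ K))
    (hI : I = Ideal.span {(X i1 : MvPolynomial σ K), (X i2) ^ a2, (X i3) ^ a3})
    (n : ℕ) (d : σ →₀ ℕ) (hd : n * (a2 * a3) ≤ wf i1 i2 i3 a2 a3 d) :
    monomial d (1 : K) ∈ intClosure (I ^ n) := by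
  classical
  set k : ℕ := a2 * a3 with hk
  have hkpos : 0 < k := by positivity
  -- first: (monomial d 1) ^ k ∈ I ^ (n * k)
  obtain ⟨s1, s2, s3, hsum, hs1, hs2, hs3⟩ :=
    exists_split (a2 * a3 * d i1) (a3 * d i2) (a2 * d i3) (n * (a2 * a3)) hd
  have hv1 : s1 ≤ (k • d) i1 := by
    simp only [Finsupp.smul_apply, smul_eq_mul, hk]; exact hs1
  have hv2 : a2 * s2 ≤ (k • d) i2 := by
    simp only [Finsupp.smul_apply, smul_eq_mul, hk]
    calc a2 * s2 ≤ a2 * (a3 * d i2) := Nat.mul_le_mul_left a2 hs2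
      _ = a2 * a3 * d i2 := by ring
  have hv3 : a3 * s3 ≤ (k • d) i3 := by
    simp only [Finsupp.smul_apply, smul_eq_mul, hk]
    calc a3 * s3 ≤ a3 * (a2 * d i3) := Nat.mul_le_mul_left a3 hs3
      _ = a2 * a3 * d i3 := by ring
  set v : σ →₀ ℕ := Finsupp.single i1 s1 + Finsupp.single i2 (a2 * s2)
    + Finsupp.single i3 (a3 * s3) with hv
  set r : σ →₀ ℕ := k • d - v with hr
  have hvr : r + v = k • d := single3_sub_add i1 i2 i3 h12 h13 h23 (k • d) s1 (a2 * s2) (a3 * s3) hv1 hv2 hv3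
  have hgen : (X i1 : MvPolynomial σ K) ^ s1 * ((X i2) ^ a2) ^ s2 * ((X i3) ^ a3) ^ s3
      ∈ I ^ (n * k) := by
    have m1 : (X i1 : MvPolynomial σ K) ∈ I := by
      rw [hI]; exact Ideal.subset_span (by simp)
    have m2 : ((X i2 : MvPolynomial σ K)) ^ a2 ∈ I := by
      rw [hI]; exact Ideal.subset_span (by simp)
    have m3 : ((X i3 : MvPolynomial σ K)) ^ a3 ∈ I := by
      rw [hI]; exact Ideal.subset_span (by simp)
    have h12' := Ideal.mul_mem_mul (Ideal.pow_mem_pow m1 s1) (Ideal.pow_mem_pow m2 s2)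
    rw [← pow_add] at h12'
    have h123 := Ideal.mul_mem_mul h12' (Ideal.pow_mem_pow m3 s3)
    rw [← pow_add] at h123
    have : n * k = s1 + s2 + s3 := by rw [hk, ← hsum]
    rw [this]
    exact h123
  have hpow : (monomial d (1 : K)) ^ k ∈ I ^ (n * k) := by
    rw [monomial_pow, one_pow, ← hvr]
    have hsplit : (monomial (r + v) (1 : K)) = monomial r 1 *
        ((X i1 : MvPolynomial σ K) ^ s1 * ((X i2) ^ a2) ^ s2 * ((X i3) ^ a3) ^ s3) := by
      rw [← pow_mul, ← pow_mul, X_pow_eq_monomial, X_pow_eq_monomial, X_pow_eq_monomial,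
        monomial_mul, monomial_mul, monomial_mul, hv]
      simp [add_assoc]
    rw [hsplit]
    exact Ideal.mul_mem_left _ _ hgen
  -- now the integral equation
  rw [intClosure]
  apply Ideal.subset_span
  refine ⟨k, hkpos, fun i => if i = k then -((monomial d (1:K)) ^ k) else 0, ?_, ?_⟩
  · intro i hi
    dsimp only
    by_cases hik : i = k
    · rw [if_pos hik, hik]
      apply neg_mem
      rw [← pow_mul]
      exact hpow
    · rw [if_neg hik]; exact zero_mem _
  · dsimp only
    have hterm : ∀ i ∈ Finset.Icc 1 k,
        (if i = k then -((monomial d (1:K)) ^ k) else 0) * (monomial d (1:K)) ^ (k - i)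
        = if i = k then -((monomial d (1:K)) ^ k) else 0 := by
      intro i _
      by_cases hik : i = k
      · rw [if_pos hik, hik, Nat.sub_self, pow_zero, mul_one]
      · rw [if_neg hik, zero_mul]
    rw [Finset.sum_congr rfl hterm, Finset.sum_ite_eq' (Finset.Icc 1 k) k
      (fun _ => -((monomial d (1:K)) ^ k)), if_pos (Finset.mem_Icc.2 ⟨hkpos, le_refl k⟩)]
    ring

lemma intClosure_pow_eq (i1 i2 i3 : σ) (h12 : i1 ≠ i2) (h13 : i1 ≠ i3) (h23 : i2 ≠ i3)
    (a2 a3 : ℕ) (ha2 : 1 ≤ a2) (ha3 : 1 ≤ a3)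
    (I : Ideal (MvPolynomial σ K))
    (hI : I = Ideal.span {(X i1 : MvPolynomial σ K), (X i2) ^ a2, (X i3) ^ a3})
    (n : ℕ) :
    intClosure (I ^ n) = wIdeal i1 i2 i3 a2 a3 K (n * (a2 * a3)) := by
  classical
  set N := n * (a2 * a3) with hN
  have hIw : I ≤ wIdeal i1 i2 i3 a2 a3 K (a2 * a3) := by
    rw [hI, Ideal.span_le]
    intro x hx
    simp only [Set.mem_insert_iff, Set.mem_singleton_iff] at hx
    rw [SetLike.mem_coe]
    rcases hx with rfl | rfl | rfl
    · rw [← pow_one (X i1 : MvPolynomial σ K), X_pow_eq_monomial]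
      exact monomial_mem_wIdeal (le_of_eq (by
        rw [wf_single i1 i2 i3 h12 h13 h23, wt, if_pos rfl, mul_one]))
    · rw [X_pow_eq_monomial]
      exact monomial_mem_wIdeal (le_of_eq (by
        rw [wf_single i1 i2 i3 h12 h13 h23, wt, if_neg (Ne.symm h12), if_pos rfl]; ring))
    · rw [X_pow_eq_monomial]
      exact monomial_mem_wIdeal (le_of_eq (by
        rw [wf_single i1 i2 i3 h12 h13 h23, wt, if_neg (Ne.symm h13), if_neg (Ne.symm h23),
          if_pos rfl]))
  have hsub : intClosure (I ^ n) ≤ wIdeal i1 i2 i3 a2 a3 K N := by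
    rw [intClosure, Ideal.span_le]
    rintro x ⟨k, hkpos, cs, hcs, heq⟩
    rw [SetLike.mem_coe]
    by_cases hx : x = 0
    · rw [hx]; exact zero_mem _
    set ν := (Phi i1 i2 i3 a2 a3 x).natTrailingDegree with hν
    rw [mem_wIdeal_iff_le_ntd i1 i2 i3 h12 h13 h23 a2 a3 hx, ← hν]
    by_contra hlt
    push_neg at hlt
    have hxν : x ∈ wIdeal i1 i2 i3 a2 a3 K ν :=
      (mem_wIdeal_iff_le_ntd i1 i2 i3 h12 h13 h23 a2 a3 hx ν).2 le_rfl
    have hsum : ∑ i ∈ Finset.Icc 1 k, cs i * x ^ (k - i)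
        ∈ wIdeal i1 i2 i3 a2 a3 K (k * ν + 1) := by
      apply Submodule.sum_mem
      intro i hi
      rw [Finset.mem_Icc] at hi
      have h1 : cs i ∈ I ^ (n * i) := by rw [pow_mul]; exact hcs i (Finset.mem_Icc.2 hi)
      have h2 : cs i ∈ wIdeal i1 i2 i3 a2 a3 K ((n * i) * (a2 * a3)) :=
        ideal_pow_le_wIdeal hIw (n * i) h1
      have h3 : x ^ (k - i) ∈ wIdeal i1 i2 i3 a2 a3 K ((k - i) * ν) :=
        pow_mem_wIdeal hxν (k - i)
      refine wIdeal_mono ?_ (mul_mem_wIdeal h2 h3)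
      have e1 : (n * i) * (a2 * a3) = i * N := by rw [hN]; ring
      have e2 : (k - i) * ν + i * ν = k * ν := by
        rw [← Nat.add_mul, Nat.sub_add_cancel hi.2]
      have e3 : i * (ν + 1) ≤ i * N := Nat.mul_le_mul_left i (by omega)
      have e4 : i * (ν + 1) = i * ν + i := by ring
      have hi1 : 1 ≤ i := hi.1
      linarith [e1, e2, e3, e4]
    have hxk : x ^ k ∈ wIdeal i1 i2 i3 a2 a3 K (k * ν + 1) := by
      have hxe : x ^ k = -∑ i ∈ Finset.Icc 1 k, cs i * x ^ (k - i) :=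
        eq_neg_of_add_eq_zero_left heq
      rw [hxe]; exact neg_mem hsum
    have hfin := (mem_wIdeal_iff_le_ntd i1 i2 i3 h12 h13 h23 a2 a3
      (pow_ne_zero k hx) (k * ν + 1)).1 hxk
    rw [map_pow, ntd_pow (Phi_ne_zero i1 i2 i3 h12 h13 h23 a2 a3 hx) k, ← hν] at hfin
    omega
  have hsup : wIdeal i1 i2 i3 a2 a3 K N ≤ intClosure (I ^ n) := by
    intro g hg
    rw [← support_sum_monomial_coeff g]
    apply Submodule.sum_mem
    intro d hd
    have h1 : monomial d (coeff d g) = MvPolynomial.C (coeff d g) * monomial d 1 := by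
      rw [C_mul_monomial, mul_one]
    rw [h1]
    exact Ideal.mul_mem_left _ _
      (monomial_mem_intClosure i1 i2 i3 h12 h13 h23 a2 a3 ha2 ha3 I hI n d (hg d hd))
  exact le_antisymm hsub hsup

lemma one_not_mem_wIdeal1 (i1 i2 i3 : σ) (a2 a3 : ℕ) :
    (1 : MvPolynomial σ K) ∉ wIdeal i1 i2 i3 a2 a3 K 1 := by
  intro h
  have h0 : (0 : σ →₀ ℕ) ∈ (1 : MvPolynomial σ K).support :=
    mem_support_iff.2 (by simp)
  have := h 0 h0
  simp [wf] at this

lemma wIdeal1_prime (i1 i2 i3 : σ) (h12 : i1 ≠ i2) (h13 : i1 ≠ i3) (h23 : i2 ≠ i3)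
    (a2 a3 : ℕ) : (wIdeal i1 i2 i3 a2 a3 K 1).IsPrime := by
  rw [Ideal.isPrime_iff]
  constructor
  · intro htop
    exact one_not_mem_wIdeal1 i1 i2 i3 a2 a3 (htop ▸ Submodule.mem_top)
  · intro f g hfg
    by_contra hcon
    push_neg at hcon
    obtain ⟨hf, hg⟩ := hcon
    have hf0 : f ≠ 0 := fun h => hf (h ▸ zero_mem _)
    have hg0 : g ≠ 0 := fun h => hg (h ▸ zero_mem _)
    have h1 : (Phi i1 i2 i3 a2 a3 f).natTrailingDegree = 0 := by
      have := mt (mem_wIdeal_iff_le_ntd i1 i2 i3 h12 h13 h23 a2 a3 hf0 1).2 hf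
      omega
    have h2 : (Phi i1 i2 i3 a2 a3 g).natTrailingDegree = 0 := by
      have := mt (mem_wIdeal_iff_le_ntd i1 i2 i3 h12 h13 h23 a2 a3 hg0 1).2 hg
      omega
    have h3 := (mem_wIdeal_iff_le_ntd i1 i2 i3 h12 h13 h23 a2 a3
      (mul_ne_zero hf0 hg0) 1).1 hfg
    rw [_root_.map_mul, Polynomial.natTrailingDegree_mul (Phi_ne_zero i1 i2 i3 h12 h13 h23 a2 a3 hf0)
      (Phi_ne_zero i1 i2 i3 h12 h13 h23 a2 a3 hg0), h1, h2] at h3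
    omega

lemma monomial_factor_X {j : σ} {d : σ →₀ ℕ} (hj : d j ≠ 0) (c : K) :
    monomial d c = X j * monomial (d - Finsupp.single j 1) c := by
  have h : Finsupp.single j 1 + (d - Finsupp.single j 1) = d := by
    ext j'
    simp only [Finsupp.add_apply, Finsupp.tsub_apply, Finsupp.single_apply]
    split_ifs with h
    · subst h; omega
    · omega
  conv_lhs => rw [← h]
  rw [monomial_single_add, pow_one]

lemma wIdeal1_le_span (i1 i2 i3 : σ) (a2 a3 : ℕ) :
    wIdeal i1 i2 i3 a2 a3 K 1
      ≤ Ideal.span {(X i1 : MvPolynomial σ K), X i2, X i3} := by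
  intro g hg
  rw [← support_sum_monomial_coeff g]
  apply Submodule.sum_mem
  intro d hd
  have h1 := hg d hd
  have h2 : ¬(d i1 = 0 ∧ d i2 = 0 ∧ d i3 = 0) := by
    rintro ⟨e1, e2, e3⟩
    rw [wf, e1, e2, e3] at h1
    simp at h1
  by_cases e1 : d i1 = 0
  · by_cases e2 : d i2 = 0
    · have e3 : d i3 ≠ 0 := fun e3 => h2 ⟨e1, e2, e3⟩
      rw [monomial_factor_X e3]
      exact Ideal.mul_mem_right _ _ (Ideal.subset_span (by simp))
    · rw [monomial_factor_X e2]
      exact Ideal.mul_mem_right _ _ (Ideal.subset_span (by simp))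
  · rw [monomial_factor_X e1]
    exact Ideal.mul_mem_right _ _ (Ideal.subset_span (by simp))

end
end VNumAux

/-- For `I = ⟨x_{i_1}, x_{i_2}^{a_2}, x_{i_3}^{a_3}⟩` with `1 ≤ a_2 ≤ a_3`:
`v(closure(I^n)) = n + a_2 + ⌈a_3/a_2⌉ − 3` for all `n ≥ 1`. -/
theorem vnumber_intClosure_pow_three_gen_a1_one
    {K : Type*} [Field K] {σ : Type*} (i1 i2 i3 : σ)
    (h12 : i1 ≠ i2) (h13 : i1 ≠ i3) (h23 : i2 ≠ i3)
    (a2 a3 : ℕ) (ha2 : 1 ≤ a2) (h23' : a2 ≤ a3)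
    (I : Ideal (MvPolynomial σ K))
    (hI : I = Ideal.span {(X i1 : MvPolynomial σ K), (X i2) ^ a2, (X i3) ^ a3})
    (n : ℕ) (hn : 1 ≤ n) :
    (vnumber (intClosure (I ^ n)) : ℤ) = (n : ℤ) + a2 + ⌈(a3 : ℚ) / (a2 : ℚ)⌉ - 3 := by
  classical
  have ha3 : 1 ≤ a3 := ha2.trans h23'
  -- the ceiling as a natural number
  obtain ⟨c, hc1, hc2⟩ : ∃ c : ℕ, a3 ≤ a2 * c ∧ a2 * c < a3 + a2 := by
    refine ⟨(a3 + a2 - 1) / a2, ?_⟩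
    have hdm := Nat.div_add_mod (a3 + a2 - 1) a2
    have hmod : (a3 + a2 - 1) % a2 < a2 := Nat.mod_lt _ (by omega)
    obtain ⟨P, hP⟩ : ∃ P, a2 * ((a3 + a2 - 1) / a2) = P := ⟨_, rfl⟩
    obtain ⟨m, hm⟩ : ∃ m, (a3 + a2 - 1) % a2 = m := ⟨_, rfl⟩
    rw [hP, hm] at hdm
    rw [hm] at hmod
    rw [hP]
    omega
  have hc0 : 1 ≤ c := by
    rcases Nat.eq_zero_or_pos c with h | h
    · rw [h, mul_zero] at hc1; omega
    · exact h
  have ha2Q : (0 : ℚ) < (a2 : ℚ) := by exact_mod_cast ha2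
  have hcZ : ((c : ℤ) : ℤ) = ⌈(a3 : ℚ) / (a2 : ℚ)⌉ := by
    symm
    rw [Int.ceil_eq_iff]
    constructor
    · rw [lt_div_iff₀ ha2Q]
      have h2' : ((a2 : ℚ) * c) < (a3 : ℚ) + a2 := by exact_mod_cast hc2
      push_cast
      nlinarith
    · rw [div_le_iff₀ ha2Q]
      have h1' : (a3 : ℚ) ≤ (a2 : ℚ) * c := by exact_mod_cast hc1
      push_cast
      nlinarith
  set N := n * (a2 * a3) with hN
  have hcloseq := VNumAux.intClosure_pow_eq i1 i2 i3 h12 h13 h23 a2 a3 ha2 ha3 I hI n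
  rw [hcloseq]
  set J := VNumAux.wIdeal i1 i2 i3 a2 a3 K N with hJ
  -- the witness monomial
  obtain ⟨b, hlow, hhigh, hdegb⟩ : ∃ b : σ →₀ ℕ,
      (N ≤ VNumAux.wf i1 i2 i3 a2 a3 b + a2) ∧ (VNumAux.wf i1 i2 i3 a2 a3 b < N) ∧
      b.degree = n + a2 + c - 3 := by
    refine ⟨Finsupp.single i1 (n - 1) + Finsupp.single i2 (a2 - 1)
      + Finsupp.single i3 (c - 1), ?_, ?_, ?_⟩
    · have hwfb : VNumAux.wf i1 i2 i3 a2 a3 (Finsupp.single i1 (n - 1)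
          + Finsupp.single i2 (a2 - 1) + Finsupp.single i3 (c - 1))
          = a2 * a3 * (n - 1) + a3 * (a2 - 1) + a2 * (c - 1) := by
        rw [VNumAux.wf_add, VNumAux.wf_add, VNumAux.wf_single i1 i2 i3 h12 h13 h23,
          VNumAux.wf_single i1 i2 i3 h12 h13 h23, VNumAux.wf_single i1 i2 i3 h12 h13 h23,
          VNumAux.wt, VNumAux.wt, VNumAux.wt, if_pos rfl, if_neg (Ne.symm h12), if_pos rfl,
          if_neg (Ne.symm h13), if_neg (Ne.symm h23), if_pos rfl]
      have hz := VNumAux.arith_wfb_low (n : ℤ) a2 a3 c (by exact_mod_cast hn)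
        (by exact_mod_cast ha2) (by exact_mod_cast h23') (by exact_mod_cast hc1)
      have hcst : ((a2 * a3 * (n - 1) + a3 * (a2 - 1) + a2 * (c - 1) : ℕ) : ℤ)
          = (a2 : ℤ) * a3 * ((n : ℤ) - 1) + (a3 : ℤ) * ((a2 : ℤ) - 1)
            + (a2 : ℤ) * ((c : ℤ) - 1) := by
        push_cast [Nat.cast_sub hn, Nat.cast_sub ha2, Nat.cast_sub hc0]
        ring
      rw [hwfb, hN]
      have : ((n * (a2 * a3) : ℕ) : ℤ)
          ≤ ((a2 * a3 * (n - 1) + a3 * (a2 - 1) + a2 * (c - 1) : ℕ) : ℤ) + (a2 : ℤ) := by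
        rw [hcst]
        push_cast
        linarith
      exact_mod_cast this
    · have hwfb : VNumAux.wf i1 i2 i3 a2 a3 (Finsupp.single i1 (n - 1)
          + Finsupp.single i2 (a2 - 1) + Finsupp.single i3 (c - 1))
          = a2 * a3 * (n - 1) + a3 * (a2 - 1) + a2 * (c - 1) := by
        rw [VNumAux.wf_add, VNumAux.wf_add, VNumAux.wf_single i1 i2 i3 h12 h13 h23,
          VNumAux.wf_single i1 i2 i3 h12 h13 h23, VNumAux.wf_single i1 i2 i3 h12 h13 h23,
          VNumAux.wt, VNumAux.wt, VNumAux.wt, if_pos rfl, if_neg (Ne.symm h12), if_pos rfl,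
          if_neg (Ne.symm h13), if_neg (Ne.symm h23), if_pos rfl]
      have hz := VNumAux.arith_wfb_high (n : ℤ) a2 a3 c (by exact_mod_cast hn)
        (by exact_mod_cast ha2) (by exact_mod_cast ha3) (by exact_mod_cast hc2)
      have hcst : ((a2 * a3 * (n - 1) + a3 * (a2 - 1) + a2 * (c - 1) : ℕ) : ℤ)
          = (a2 : ℤ) * a3 * ((n : ℤ) - 1) + (a3 : ℤ) * ((a2 : ℤ) - 1)
            + (a2 : ℤ) * ((c : ℤ) - 1) := by
        push_cast [Nat.cast_sub hn, Nat.cast_sub ha2, Nat.cast_sub hc0]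
        ring
      rw [hwfb, hN]
      have : ((a2 * a3 * (n - 1) + a3 * (a2 - 1) + a2 * (c - 1) : ℕ) : ℤ)
          < ((n * (a2 * a3) : ℕ) : ℤ) := by
        rw [hcst]
        push_cast
        linarith
      exact_mod_cast this
    · rw [VNumAux.degree_add', VNumAux.degree_add', VNumAux.degree_single',
        VNumAux.degree_single', VNumAux.degree_single']
      omega
  have hf0ne : (monomial b (1 : K)) ≠ 0 := by
    rw [Ne, monomial_eq_zero]; exact one_ne_zero
  -- colon ideal computation
  have hcolon : Submodule.colon J (Ideal.span {(monomial b (1 : K) : MvPolynomial σ K)})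
      = VNumAux.wIdeal i1 i2 i3 a2 a3 K 1 := by
    apply le_antisymm
    · intro g hgc
      rw [Ideal.mem_colon_span_singleton] at hgc
      by_contra hg
      have hg0 : g ≠ 0 := fun h => hg (h ▸ zero_mem _)
      have h1 : (VNumAux.Phi i1 i2 i3 a2 a3 g).natTrailingDegree = 0 := by
        have := mt (VNumAux.mem_wIdeal_iff_le_ntd i1 i2 i3 h12 h13 h23 a2 a3 hg0 1).2 hg
        omega
      have h2 := (VNumAux.mem_wIdeal_iff_le_ntd i1 i2 i3 h12 h13 h23 a2 a3
        (mul_ne_zero hg0 hf0ne) N).1 hgc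
      rw [_root_.map_mul, Polynomial.natTrailingDegree_mul
        (VNumAux.Phi_ne_zero i1 i2 i3 h12 h13 h23 a2 a3 hg0)
        (VNumAux.Phi_ne_zero i1 i2 i3 h12 h13 h23 a2 a3 hf0ne), h1,
        VNumAux.ntd_Phi_monomial i1 i2 i3 h12 h13 h23 a2 a3 b one_ne_zero] at h2
      omega
    · refine le_trans (VNumAux.wIdeal1_le_span i1 i2 i3 a2 a3) ?_
      rw [Ideal.span_le]
      intro x hx
      simp only [Set.mem_insert_iff, Set.mem_singleton_iff] at hx
      rw [SetLike.mem_coe, Ideal.mem_colon_span_singleton]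
      have ha2a3 : a2 ≤ a2 * a3 := Nat.le_mul_of_pos_right a2 (by omega)
      have ha3' : a2 ≤ a3 := h23'
      rcases hx with rfl | rfl | rfl
      · rw [← pow_one (X i1 : MvPolynomial σ K), ← monomial_single_add]
        apply VNumAux.monomial_mem_wIdeal
        rw [VNumAux.wf_add, VNumAux.wf_single i1 i2 i3 h12 h13 h23, VNumAux.wt,
          if_pos rfl, mul_one]
        calc N ≤ VNumAux.wf i1 i2 i3 a2 a3 b + a2 := hlow
          _ ≤ VNumAux.wf i1 i2 i3 a2 a3 b + a2 * a3 := Nat.add_le_add_left ha2a3 _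
          _ = a2 * a3 + VNumAux.wf i1 i2 i3 a2 a3 b := Nat.add_comm _ _
      · rw [← pow_one (X i2 : MvPolynomial σ K), ← monomial_single_add]
        apply VNumAux.monomial_mem_wIdeal
        rw [VNumAux.wf_add, VNumAux.wf_single i1 i2 i3 h12 h13 h23, VNumAux.wt,
          if_neg (Ne.symm h12), if_pos rfl, mul_one]
        calc N ≤ VNumAux.wf i1 i2 i3 a2 a3 b + a2 := hlow
          _ ≤ VNumAux.wf i1 i2 i3 a2 a3 b + a3 := Nat.add_le_add_left ha3' _
          _ = a3 + VNumAux.wf i1 i2 i3 a2 a3 b := Nat.add_comm _ _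
      · rw [← pow_one (X i3 : MvPolynomial σ K), ← monomial_single_add]
        apply VNumAux.monomial_mem_wIdeal
        rw [VNumAux.wf_add, VNumAux.wf_single i1 i2 i3 h12 h13 h23, VNumAux.wt,
          if_neg (Ne.symm h13), if_neg (Ne.symm h23), if_pos rfl, mul_one]
        calc N ≤ VNumAux.wf i1 i2 i3 a2 a3 b + a2 := hlow
          _ = a2 + VNumAux.wf i1 i2 i3 a2 a3 b := Nat.add_comm _ _
  have hprime := VNumAux.wIdeal1_prime (K := K) i1 i2 i3 h12 h13 h23 a2 a3
  have hann : Submodule.colon J (Ideal.span {(monomial b (1 : K) : MvPolynomial σ K)})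
      = (Submodule.span (MvPolynomial σ K)
          {(Ideal.Quotient.mk J) (monomial b (1 : K))}).annihilator := by
    ext r
    rw [Submodule.mem_annihilator_span_singleton, Ideal.mem_colon_span_singleton]
    have : r • (Ideal.Quotient.mk J) (monomial b (1 : K))
        = (Ideal.Quotient.mk J) (r * monomial b (1 : K)) := by
      rw [← smul_eq_mul]
      exact (Submodule.Quotient.mk_smul J r _).symm
    rw [this, Ideal.Quotient.eq_zero_iff_mem]
  have hmem : (n + a2 + c - 3) ∈ {d : ℕ | ∃ f : MvPolynomial σ K, f.IsHomogeneous d ∧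
      Submodule.colon J (Ideal.span {f}) ∈
        associatedPrimes (MvPolynomial σ K) (MvPolynomial σ K ⧸ J)} := by
    refine ⟨monomial b 1, isHomogeneous_monomial _ hdegb, ?_⟩
    rw [AssociatedPrimes.mem_iff]
    exact ⟨by rw [hcolon]; exact hprime, ⟨(Ideal.Quotient.mk J) (monomial b (1 : K)), by
      rw [Submodule.bot_colon', ← hann, hcolon, hprime.radical]⟩⟩
  have hbound : ∀ d ∈ {d : ℕ | ∃ f : MvPolynomial σ K, f.IsHomogeneous d ∧
      Submodule.colon J (Ideal.span {f}) ∈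
        associatedPrimes (MvPolynomial σ K) (MvPolynomial σ K ⧸ J)},
      n + a2 + c - 3 ≤ d := by
    rintro d ⟨f, hfhom, hass⟩
    have hQprime : (Submodule.colon J (Ideal.span {f})).IsPrime :=
      (AssociatedPrimes.mem_iff.1 hass).isPrime
    have hJcolon : J ≤ Submodule.colon J (Ideal.span {f}) := fun g hg =>
      Ideal.mem_colon_span_singleton.2 (Ideal.mul_mem_right f J hg)
    have hfJ : f ∉ J := by
      intro hf
      exact hQprime.ne_top ((Ideal.eq_top_iff_one _).2
        (Ideal.mem_colon_span_singleton.2 (by rwa [one_mul])))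
    obtain ⟨db, hdb, hwdb⟩ : ∃ db ∈ f.support, VNumAux.wf i1 i2 i3 a2 a3 db < N := by
      by_contra hcon
      push_neg at hcon
      exact hfJ hcon
    have hX3 : X i3 ∈ Submodule.colon J (Ideal.span {f}) := by
      apply hQprime.mem_of_pow_mem (n * a3)
      apply hJcolon
      rw [X_pow_eq_monomial]
      apply VNumAux.monomial_mem_wIdeal
      rw [VNumAux.wf_single i1 i2 i3 h12 h13 h23, VNumAux.wt, if_neg (Ne.symm h13),
        if_neg (Ne.symm h23), if_pos rfl, hN]
      exact le_of_eq (by ring)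
    have hX3f : X i3 * f ∈ J := Ideal.mem_colon_span_singleton.1 hX3
    have hmem2 : Finsupp.single i3 1 + db ∈ (X i3 * f).support :=
      mem_support_iff.2 (by rw [coeff_X_mul]; exact mem_support_iff.1 hdb)
    have hkey := hX3f _ hmem2
    rw [VNumAux.wf_add, VNumAux.wf_single i1 i2 i3 h12 h13 h23, VNumAux.wt,
      if_neg (Ne.symm h13), if_neg (Ne.symm h23), if_pos rfl, mul_one] at hkey
    have hdeg : db.degree = d := by
      have := hfhom (mem_support_iff.1 hdb)
      rw [Finsupp.degree_eq_weight_one]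
      exact this
    have hsum3 : db i1 + db i2 + db i3 ≤ d :=
      hdeg ▸ VNumAux.sum_three_le_degree i1 i2 i3 h12 h13 h23 db
    have hkeyN : n * (a2 * a3) ≤ a2 * a3 * db i1 + a3 * db i2 + a2 * db i3 + a2 := by
      have h' : n * (a2 * a3) ≤ a2 + (a2 * a3 * db i1 + a3 * db i2 + a2 * db i3) := hkey
      omega
    have hwdbN : a2 * a3 * db i1 + a3 * db i2 + a2 * db i3 < n * (a2 * a3) := hwdb
    have hz := VNumAux.arith_lower (n : ℤ) a2 a3 c (db i1) (db i2) (db i3)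
      (by exact_mod_cast hn) (by exact_mod_cast ha2) (by exact_mod_cast h23')
      (by exact_mod_cast hc1) (by exact_mod_cast hc2)
      (by positivity) (by positivity) (by positivity)
      (by exact_mod_cast hkeyN) (by exact_mod_cast hwdbN)
    omega
  have hv : vnumber J = n + a2 + c - 3 := by
    simp only [vnumber]
    exact le_antisymm (Nat.sInf_le hmem) (le_csInf ⟨_, hmem⟩ hbound)
  rw [hv, ← hcZ]
  have h3le : 3 ≤ n + a2 + c := by omega
  push_cast [Nat.cast_sub h3le]
  ring
end
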